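/- arXiv:1207.1580 — 5 statements merged into one kernel-verified Lean document; each statement's English description precedes it below -/
import Mathlib

section
/- Let K ⊆ L ⊆ M be fields. Then M : K is radically solvable if and only if both M : L and L : K are radically solvable; likewise, M : K is quadratically solvable if and only if both M : L and L : K are quadratically solvable. -/
/-- The subfield generated by a subfield `K` and an element `x`. -/
def Subfield.adjoinEl {F : Type*} [Field F] (K : Subfield F) (x : F) : Subfield F :=
  Subfield.closure (↑K ∪ {x})

/-- `M` is a radical extension of `K`: there is a tower
`K = K₁ ⊆ K₂ ⊆ … ⊆ K_t = M` with `K_{i+1} = K_i(x_i)` and `x_i ^ n_i ∈ K_i`. -/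
def IsRadicalExtension {F : Type*} [Field F] (K M : Subfield F) : Prop :=
  ∃ t : ℕ, ∃ c : Fin (t + 1) → Subfield F,
    c 0 = K ∧ c (Fin.last t) = M ∧
    ∀ i : Fin t, ∃ x : F, ∃ n : ℕ, 0 < n ∧ x ^ n ∈ c i.castSucc ∧
      c i.succ = (c i.castSucc).adjoinEl x

/-- `M` is a quadratic extension of `K`: a radical extension with all `n_i = 2`. -/
def IsQuadraticExtension {F : Type*} [Field F] (K M : Subfield F) : Prop :=
  ∃ t : ℕ, ∃ c : Fin (t + 1) → Subfield F,
    c 0 = K ∧ c (Fin.last t) = M ∧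
    ∀ i : Fin t, ∃ x : F, x ^ 2 ∈ c i.castSucc ∧
      c i.succ = (c i.castSucc).adjoinEl x

/-- `L : K` is radically solvable if `L` is contained in a radical extension of `K`. -/
def RadicallySolvable {F : Type*} [Field F] (K L : Subfield F) : Prop :=
  ∃ M : Subfield F, L ≤ M ∧ IsRadicalExtension K M

/-- `L : K` is quadratically solvable if `L` is contained in a quadratic extension of `K`. -/
def QuadraticallySolvable {F : Type*} [Field F] (K L : Subfield F) : Prop :=
  ∃ M : Subfield F, L ≤ M ∧ IsQuadraticExtension K M

section Aux

variable {F : Type*} [Field F]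

lemma adjoinEl_sup (C A : Subfield F) (x : F) :
    (C ⊔ A).adjoinEl x = C ⊔ A.adjoinEl x := by
  rw [Subfield.adjoinEl, Subfield.adjoinEl, Subfield.closure_union, Subfield.closure_union,
    Subfield.closure_eq, Subfield.closure_eq, sup_assoc]

/-- A tower of steps is the same as the reflexive transitive closure of the step relation. -/
lemma tower_iff_rtg (S : Subfield F → Subfield F → Prop) (K M : Subfield F) :
    (∃ t : ℕ, ∃ c : Fin (t + 1) → Subfield F,
        c 0 = K ∧ c (Fin.last t) = M ∧ ∀ i : Fin t, S (c i.castSucc) (c i.succ)) ↔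
      Relation.ReflTransGen S K M := by
  constructor
  · rintro ⟨t, c, rfl, rfl, h⟩
    have : ∀ i : Fin (t + 1), Relation.ReflTransGen S (c 0) (c i) := by
      intro i
      induction i using Fin.induction with
      | zero => exact Relation.ReflTransGen.refl
      | succ j ih => exact ih.tail (h j)
    exact this _
  · intro h
    induction h with
    | refl => exact ⟨0, fun _ => K, rfl, rfl, fun i => i.elim0⟩
    | @tail A B hKA hAB ih =>
      obtain ⟨t, c, hc0, hcl, hstep⟩ := ih
      refine ⟨t + 1, Fin.snoc c B, ?_, ?_, ?_⟩
      · rw [show (0 : Fin (t + 2)) = Fin.castSucc 0 from rfl, Fin.snoc_castSucc, hc0]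
      · rw [Fin.snoc_last]
      · intro i
        induction i using Fin.lastCases with
        | last =>
          have h1 : Fin.castSucc (Fin.last t) = Fin.castSucc (Fin.last t) := rfl
          rw [Fin.succ_last]
          rw [Fin.snoc_castSucc, Fin.snoc_last, hcl]
          exact hAB
        | cast j =>
          rw [Fin.succ_castSucc, Fin.snoc_castSucc, Fin.snoc_castSucc]
          exact hstep j

lemma rtg_sup {S : Subfield F → Subfield F → Prop}
    (hS : ∀ C A B : Subfield F, S A B → S (C ⊔ A) (C ⊔ B)) (C : Subfield F)
    {A B : Subfield F} (h : Relation.ReflTransGen S A B) :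
    Relation.ReflTransGen S (C ⊔ A) (C ⊔ B) :=
  Relation.ReflTransGen.lift (fun X => C ⊔ X) (fun a b hab => hS C a b hab) A B h

/-- Generic form of the solvability transitivity statement. -/
lemma solvable_iff_aux {S : Subfield F → Subfield F → Prop}
    (hS : ∀ C A B : Subfield F, S A B → S (C ⊔ A) (C ⊔ B))
    {K L M : Subfield F} (hKL : K ≤ L) (hLM : L ≤ M) :
    (∃ N, M ≤ N ∧ Relation.ReflTransGen S K N) ↔
      (∃ N, M ≤ N ∧ Relation.ReflTransGen S L N) ∧
        (∃ N, L ≤ N ∧ Relation.ReflTransGen S K N) := by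
  constructor
  · rintro ⟨N, hMN, h⟩
    refine ⟨⟨L ⊔ N, hMN.trans le_sup_right, ?_⟩, ⟨N, hLM.trans hMN, h⟩⟩
    have := rtg_sup hS L h
    rwa [sup_eq_left.2 hKL] at this
  · rintro ⟨⟨N₁, hMN₁, h₁⟩, ⟨N₂, hLN₂, h₂⟩⟩
    refine ⟨N₂ ⊔ N₁, hMN₁.trans le_sup_right, h₂.trans ?_⟩
    have := rtg_sup hS N₂ h₁
    rwa [sup_eq_left.2 hLN₂] at this

lemma radStep_sup (C A B : Subfield F)
    (h : ∃ x : F, ∃ n : ℕ, 0 < n ∧ x ^ n ∈ A ∧ B = A.adjoinEl x) :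
    ∃ x : F, ∃ n : ℕ, 0 < n ∧ x ^ n ∈ C ⊔ A ∧ C ⊔ B = (C ⊔ A).adjoinEl x := by
  obtain ⟨x, n, hn, hx, rfl⟩ := h
  exact ⟨x, n, hn, SetLike.le_def.1 le_sup_right hx, (adjoinEl_sup C A x).symm⟩

lemma quadStep_sup (C A B : Subfield F)
    (h : ∃ x : F, x ^ 2 ∈ A ∧ B = A.adjoinEl x) :
    ∃ x : F, x ^ 2 ∈ C ⊔ A ∧ C ⊔ B = (C ⊔ A).adjoinEl x := by
  obtain ⟨x, hx, rfl⟩ := h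
  exact ⟨x, SetLike.le_def.1 le_sup_right hx, (adjoinEl_sup C A x).symm⟩

lemma radSolvable_iff (K L : Subfield F) :
    RadicallySolvable K L ↔ ∃ N, L ≤ N ∧
      Relation.ReflTransGen
        (fun A B : Subfield F => ∃ x : F, ∃ n : ℕ, 0 < n ∧ x ^ n ∈ A ∧ B = A.adjoinEl x) K N :=
  exists_congr fun N => and_congr_right fun _ =>
    tower_iff_rtg (fun A B : Subfield F =>
      ∃ x : F, ∃ n : ℕ, 0 < n ∧ x ^ n ∈ A ∧ B = A.adjoinEl x) K N

lemma quadSolvable_iff (K L : Subfield F) :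
    QuadraticallySolvable K L ↔ ∃ N, L ≤ N ∧
      Relation.ReflTransGen
        (fun A B : Subfield F => ∃ x : F, x ^ 2 ∈ A ∧ B = A.adjoinEl x) K N :=
  exists_congr fun N => and_congr_right fun _ =>
    tower_iff_rtg (fun A B : Subfield F => ∃ x : F, x ^ 2 ∈ A ∧ B = A.adjoinEl x) K N

end Aux

/-- Lemma: for fields `K ⊆ L ⊆ M`, the extension `M : K` is radically (respectively
quadratically) solvable iff both `M : L` and `L : K` are. -/
theorem statement0 {F : Type*} [Field F] (K L M : Subfield F)
    (hKL : K ≤ L) (hLM : L ≤ M) :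
    (RadicallySolvable K M ↔ (RadicallySolvable L M ∧ RadicallySolvable K L)) ∧
    (QuadraticallySolvable K M ↔ (QuadraticallySolvable L M ∧ QuadraticallySolvable K L)) := by
  constructor
  · rw [radSolvable_iff, radSolvable_iff, radSolvable_iff]
    exact solvable_iff_aux radStep_sup hKL hLM
  · rw [quadSolvable_iff, quadSolvable_iff, quadSolvable_iff]
    exact solvable_iff_aux quadStep_sup hKL hLM
end

section
/- Suppose X = (X₁,…,X_r), Y = (Y₁,…,Y_s) and Z = (Z₁,…,Z_t) are vectors of indeterminates, f = (f₁,…,f_m) ∈ ℚ[X,Y]^m and g = (g₁,…,g_n) ∈ ℚ[Y,Z]^n, and ℚ(X,Y,Z) is a finite extension of ℚ(f,g). Then ℚ(X,Y,Z) : ℚ(f,g) is radically (respectively quadratically) solvable if and only if both ℚ(f,Y,Z) : ℚ(f,g) and ℚ(X,Y) : ℚ(f,Y) are radically (respectively quadratically) solvable. -/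
noncomputable section

/-- `L : K` is a finite extension of subfields. -/
def FiniteExtS {F : Type*} [Field F] (K L : Subfield F) : Prop :=
  ∃ h : K ≤ L,
    @FiniteDimensional ↥K ↥L _ _
      (@Algebra.toModule _ _ _ _ ((Subfield.inclusion h).toAlgebra))

/-- `ℚ(X,Y,Z)`: the field of rational functions in the indeterminates
`X₁,…,X_r, Y₁,…,Y_s, Z₁,…,Z_t` over `ℚ`. -/
abbrev FracXYZ (r s t : ℕ) : Type := FractionRing (MvPolynomial (Fin r ⊕ (Fin s ⊕ Fin t)) ℚ)

def toFracXYZ (r s t : ℕ) : MvPolynomial (Fin r ⊕ (Fin s ⊕ Fin t)) ℚ →+* FracXYZ r s t :=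
  algebraMap _ _

/-- The indeterminate `X_i` in `ℚ(X,Y,Z)`. -/
def xVar (r s t : ℕ) (i : Fin r) : FracXYZ r s t :=
  toFracXYZ r s t (MvPolynomial.X (Sum.inl i))

/-- The indeterminate `Y_j` in `ℚ(X,Y,Z)`. -/
def yVar (r s t : ℕ) (j : Fin s) : FracXYZ r s t :=
  toFracXYZ r s t (MvPolynomial.X (Sum.inr (Sum.inl j)))

/-- The indeterminate `Z_k` in `ℚ(X,Y,Z)`. -/
def zVar (r s t : ℕ) (k : Fin t) : FracXYZ r s t :=
  toFracXYZ r s t (MvPolynomial.X (Sum.inr (Sum.inr k)))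

/-- The inclusion `ℚ[X,Y] → ℚ(X,Y,Z)`. -/
def liftXY (r s t : ℕ) : MvPolynomial (Fin r ⊕ Fin s) ℚ →+* FracXYZ r s t :=
  (toFracXYZ r s t).comp
    (MvPolynomial.rename (Sum.map (id : Fin r → Fin r)
      (Sum.inl : Fin s → Fin s ⊕ Fin t))).toRingHom

/-- The inclusion `ℚ[Y,Z] → ℚ(X,Y,Z)`. -/
def liftYZ (r s t : ℕ) : MvPolynomial (Fin s ⊕ Fin t) ℚ →+* FracXYZ r s t :=
  (toFracXYZ r s t).comp
    (MvPolynomial.rename (Sum.inr : Fin s ⊕ Fin t → Fin r ⊕ (Fin s ⊕ Fin t))).toRingHom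

/-- The subfield `ℚ(f,g)` of `ℚ(X,Y,Z)`. -/
def Qfg (r s t m n : ℕ) (f : Fin m → MvPolynomial (Fin r ⊕ Fin s) ℚ)
    (g : Fin n → MvPolynomial (Fin s ⊕ Fin t) ℚ) : Subfield (FracXYZ r s t) :=
  Subfield.closure
    (Set.range (fun i => liftXY r s t (f i)) ∪ Set.range (fun j => liftYZ r s t (g j)))

/-- The subfield `ℚ(X,Y,Z)` (generated by all the indeterminates). -/
def QXYZ (r s t : ℕ) : Subfield (FracXYZ r s t) :=
  Subfield.closure (Set.range (xVar r s t) ∪ Set.range (yVar r s t) ∪ Set.range (zVar r s t))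

/-- The subfield `ℚ(f,Y,Z)`. -/
def QfYZ (r s t m : ℕ) (f : Fin m → MvPolynomial (Fin r ⊕ Fin s) ℚ) :
    Subfield (FracXYZ r s t) :=
  Subfield.closure
    (Set.range (fun i => liftXY r s t (f i)) ∪ Set.range (yVar r s t) ∪ Set.range (zVar r s t))

/-- The subfield `ℚ(X,Y)`. -/
def QXY (r s t : ℕ) : Subfield (FracXYZ r s t) :=
  Subfield.closure (Set.range (xVar r s t) ∪ Set.range (yVar r s t))

/-- The subfield `ℚ(f,Y)`. -/
def QfY (r s t m : ℕ) (f : Fin m → MvPolynomial (Fin r ⊕ Fin s) ℚ) :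
    Subfield (FracXYZ r s t) :=
  Subfield.closure (Set.range (fun i => liftXY r s t (f i)) ∪ Set.range (yVar r s t))


/- ========================  auxiliary development  ======================== -/

namespace RadProof
variable {F : Type*} [Field F]

/-- generic step -/
def Step (S : Set ℕ) (A B : Subfield F) : Prop :=
  ∃ x n, n ∈ S ∧ x ^ n ∈ A ∧ B = Subfield.closure (↑A ∪ {x})

lemma adjoin_eq_sup (A : Subfield F) (x : F) :
    Subfield.closure (↑A ∪ {x}) = A ⊔ Subfield.closure {x} := by
  rw [Subfield.closure_union, Subfield.closure_eq]

lemma le_adjoin (A : Subfield F) (x : F) : A ≤ Subfield.closure (↑A ∪ {x}) := by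
  rw [adjoin_eq_sup]; exact le_sup_left

lemma mem_adjoin (A : Subfield F) (x : F) : x ∈ Subfield.closure (↑A ∪ {x}) :=
  Subfield.subset_closure (Set.mem_union_right _ rfl)

lemma Step.le {S : Set ℕ} {A B : Subfield F} (h : Step S A B) : A ≤ B := by
  obtain ⟨x, n, -, -, rfl⟩ := h; exact le_adjoin A x

def Chain (S : Set ℕ) : Subfield F → Subfield F → Prop :=
  Relation.ReflTransGen (Step S)

lemma Chain.le {S : Set ℕ} {A B : Subfield F} (h : Chain S A B) : A ≤ B := by
  induction h with
  | refl => exact le_rfl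
  | tail _ h ih => exact ih.trans h.le

/-- tower form iff chain form -/
lemma tower_iff_chain (S : Set ℕ) (K M : Subfield F) :
    (∃ t : ℕ, ∃ c : Fin (t + 1) → Subfield F,
      c 0 = K ∧ c (Fin.last t) = M ∧
      ∀ i : Fin t, ∃ x n, n ∈ S ∧ x ^ n ∈ c i.castSucc ∧
        c i.succ = Subfield.closure (↑(c i.castSucc) ∪ {x})) ↔ Chain S K M := by
  constructor
  · rintro ⟨t, c, h0, hl, hs⟩
    subst h0 hl
    have : ∀ j : Fin (t+1), Chain S (c 0) (c j) := by
      intro j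
      induction j using Fin.induction with
      | zero => exact Relation.ReflTransGen.refl
      | succ j ih =>
        exact ih.tail ⟨_, _, (hs j).choose_spec.choose_spec.1,
          (hs j).choose_spec.choose_spec.2.1, (hs j).choose_spec.choose_spec.2.2⟩
    exact this (Fin.last t)
  · intro h
    induction h with
    | refl =>
      exact ⟨0, fun _ => K, rfl, rfl, fun i => i.elim0⟩
    | @tail B B' _ hstep ih =>
      obtain ⟨t, c, h0, hl, hs⟩ := ih
      refine ⟨t + 1, Fin.snoc c B', ?_, ?_, ?_⟩
      · simpa [Fin.snoc] using h0
      · simp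
      · intro i
        induction i using Fin.lastCases with
        | last =>
          obtain ⟨x, n, hn, hx, hB'⟩ := hstep
          refine ⟨x, n, hn, ?_, ?_⟩
          · rw [Fin.snoc_castSucc, hl]; exact hx
          · rw [Fin.succ_last, Fin.snoc_last, Fin.snoc_castSucc, hl]; exact hB'
        | cast j =>
          obtain ⟨x, n, hn, hx, hc⟩ := hs j
          refine ⟨x, n, hn, ?_, ?_⟩
          · rw [Fin.snoc_castSucc]; exact hx
          · rw [Fin.succ_castSucc, Fin.snoc_castSucc, Fin.snoc_castSucc]; exact hc

lemma chain_lift {S : Set ℕ} {K M K' : Subfield F} (h : Chain S K M) (hK : K ≤ K') :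
    Chain S K' (K' ⊔ M) := by
  induction h with
  | refl =>
    rw [sup_eq_left.mpr hK]
    exact Relation.ReflTransGen.refl
  | @tail B B' hKB hstep ih =>
    obtain ⟨x, n, hn, hx, rfl⟩ := hstep
    have hBle : B ≤ K' ⊔ B := le_sup_right
    have : Step S (K' ⊔ B) ((K' ⊔ B) ⊔ Subfield.closure {x}) :=
      ⟨x, n, hn, hBle hx, (adjoin_eq_sup _ x).symm⟩
    have h2 := ih.tail this
    rwa [adjoin_eq_sup, ← sup_assoc]

open MvPolynomial

lemma polymem {σ : Type*} {F : Type*} [Field F] (ψ : MvPolynomial σ ℚ →+* F)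
    (S : Subfield F) (hX : ∀ v, ψ (X v) ∈ S) : ∀ p, ψ p ∈ S := by
  intro p
  induction p using MvPolynomial.induction_on with
  | C c =>
    have h1 : ψ (C c) = (ψ.comp (C : ℚ →+* MvPolynomial σ ℚ)) c := rfl
    rw [h1, eq_ratCast]
    exact SubfieldClass.ratCast_mem S c
  | add p q hp hq => rw [map_add]; exact add_mem hp hq
  | mul_X p v hp => rw [map_mul]; exact mul_mem hp (hX v)

variable {r s t : ℕ}

def phiFun (a : Fin t → ℚ) : Fin r ⊕ (Fin s ⊕ Fin t) → MvPolynomial (Fin r ⊕ (Fin s ⊕ Fin t)) ℚ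
  | Sum.inl i => X (Sum.inl i)
  | Sum.inr (Sum.inl j) => X (Sum.inr (Sum.inl j))
  | Sum.inr (Sum.inr k) => C (a k)

def phi (a : Fin t → ℚ) :
    MvPolynomial (Fin r ⊕ (Fin s ⊕ Fin t)) ℚ →+* MvPolynomial (Fin r ⊕ (Fin s ⊕ Fin t)) ℚ :=
  (aeval (phiFun (r := r) (s := s) a)).toRingHom

@[simp] lemma phi_X (a : Fin t → ℚ) (v) :
    phi (r := r) (s := s) a (X v) = phiFun a v := aeval_X _ v

@[simp] lemma phi_C (a : Fin t → ℚ) (c : ℚ) :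
    phi (r := r) (s := s) a (C c) = C c := by
  show aeval _ (C c) = _
  rw [aeval_C, algebraMap_eq]

def mrg (v : Fin r ⊕ (Fin s ⊕ Fin t) → ℚ) (a : Fin t → ℚ) : Fin r ⊕ (Fin s ⊕ Fin t) → ℚ
  | Sum.inl i => v (Sum.inl i)
  | Sum.inr (Sum.inl j) => v (Sum.inr (Sum.inl j))
  | Sum.inr (Sum.inr k) => a k

lemma phi_eval (a : Fin t → ℚ) (v : Fin r ⊕ (Fin s ⊕ Fin t) → ℚ) (p) :
    eval v (phi (r := r) (s := s) a p) = eval (mrg v a) p := by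
  induction p using MvPolynomial.induction_on with
  | C c => simp
  | add p q hp hq => simp [hp, hq]
  | mul_X p w hp =>
    rw [map_mul, map_mul, map_mul, hp, phi_X]
    rcases w with i | j | k <;> simp [phiFun, mrg]

lemma exists_good (Q : MvPolynomial (Fin r ⊕ (Fin s ⊕ Fin t)) ℚ) (hQ : Q ≠ 0) :
    ∃ a : Fin t → ℚ, phi (r := r) (s := s) a Q ≠ 0 := by
  by_contra hcon
  push_neg at hcon
  apply hQ
  apply MvPolynomial.funext
  intro v
  have h1 := phi_eval (fun k => v (Sum.inr (Sum.inr k))) v Q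
  rw [hcon _, map_zero] at h1
  have h2 : mrg v (fun k => v (Sum.inr (Sum.inr k))) = v := by
    funext w; rcases w with i | j | k <;> rfl
  rw [h2] at h1
  rw [← h1, map_zero]

lemma iota_inj : Function.Injective (toFracXYZ r s t) :=
  IsFractionRing.injective _ _

lemma iota_ne {p : MvPolynomial (Fin r ⊕ (Fin s ⊕ Fin t)) ℚ} (hp : p ≠ 0) :
    toFracXYZ r s t p ≠ 0 := by
  intro h
  exact hp (iota_inj (by rw [h, map_zero]))

def Oev (a : Fin t → ℚ) (h : FracXYZ r s t) : Prop :=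
  ∃ pq : MvPolynomial (Fin r ⊕ (Fin s ⊕ Fin t)) ℚ × MvPolynomial (Fin r ⊕ (Fin s ⊕ Fin t)) ℚ,
    phi a pq.2 ≠ 0 ∧ h * toFracXYZ r s t pq.2 = toFracXYZ r s t pq.1

open Classical in
noncomputable def ev (a : Fin t → ℚ) (h : FracXYZ r s t) : FracXYZ r s t :=
  if H : Oev a h then
    toFracXYZ r s t (phi a H.choose.1) / toFracXYZ r s t (phi a H.choose.2) else 0

lemma ev_spec {a : Fin t → ℚ} {h : FracXYZ r s t} {p q}
    (hq : phi (r := r) (s := s) a q ≠ 0) (hrep : h * toFracXYZ r s t q = toFracXYZ r s t p) :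
    ev a h = toFracXYZ r s t (phi a p) / toFracXYZ r s t (phi a q) := by
  have H : Oev a h := ⟨(p, q), hq, hrep⟩
  rw [ev, dif_pos H]
  obtain ⟨hq0, hr0⟩ := H.choose_spec
  have hpq : p * H.choose.2 = H.choose.1 * q := by
    apply iota_inj
    rw [map_mul, map_mul, ← hrep, ← hr0]; ring
  have h3 := congrArg (fun z => toFracXYZ r s t (phi a z)) hpq
  simp only [map_mul] at h3
  rw [div_eq_div_iff (iota_ne hq0) (iota_ne hq)]
  exact h3.symm

lemma Oev.rep {a : Fin t → ℚ} {h : FracXYZ r s t} (H : Oev a h) :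
    ∃ p q, phi (r := r) (s := s) a q ≠ 0 ∧ h * toFracXYZ r s t q = toFracXYZ r s t p ∧
      ev a h = toFracXYZ r s t (phi a p) / toFracXYZ r s t (phi a q) :=
  ⟨H.choose.1, H.choose.2, H.choose_spec.1, H.choose_spec.2,
    ev_spec H.choose_spec.1 H.choose_spec.2⟩

lemma ev_iota (a : Fin t → ℚ) (p) :
    Oev a (toFracXYZ r s t p) ∧ ev a (toFracXYZ r s t p) = toFracXYZ r s t (phi a p) := by
  have hq : phi (r := r) (s := s) a 1 ≠ 0 := by rw [map_one]; exact one_ne_zero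
  have hrep : toFracXYZ r s t p * toFracXYZ r s t 1 = toFracXYZ r s t p := by
    rw [map_one, mul_one]
  exact ⟨⟨(p, 1), hq, hrep⟩, by rw [ev_spec hq hrep, map_one, map_one, div_one]⟩

lemma ev_mul {a : Fin t → ℚ} {h₁ h₂ : FracXYZ r s t} (H1 : Oev a h₁) (H2 : Oev a h₂) :
    Oev a (h₁ * h₂) ∧ ev a (h₁ * h₂) = ev a h₁ * ev a h₂ := by
  obtain ⟨p1, q1, hq1, e1, v1⟩ := H1.rep
  obtain ⟨p2, q2, hq2, e2, v2⟩ := H2.rep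
  have hq : phi (r := r) (s := s) a (q1 * q2) ≠ 0 := by
    rw [map_mul]; exact mul_ne_zero hq1 hq2
  have hrep : (h₁ * h₂) * toFracXYZ r s t (q1 * q2) = toFracXYZ r s t (p1 * p2) := by
    rw [map_mul, map_mul, ← e1, ← e2]; ring
  refine ⟨⟨(p1 * p2, q1 * q2), hq, hrep⟩, ?_⟩
  rw [ev_spec hq hrep, v1, v2, map_mul, map_mul, map_mul, map_mul, div_mul_div_comm]

lemma ev_add {a : Fin t → ℚ} {h₁ h₂ : FracXYZ r s t} (H1 : Oev a h₁) (H2 : Oev a h₂) :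
    Oev a (h₁ + h₂) ∧ ev a (h₁ + h₂) = ev a h₁ + ev a h₂ := by
  obtain ⟨p1, q1, hq1, e1, v1⟩ := H1.rep
  obtain ⟨p2, q2, hq2, e2, v2⟩ := H2.rep
  have hq : phi (r := r) (s := s) a (q1 * q2) ≠ 0 := by
    rw [map_mul]; exact mul_ne_zero hq1 hq2
  have hrep : (h₁ + h₂) * toFracXYZ r s t (q1 * q2) = toFracXYZ r s t (p1 * q2 + p2 * q1) := by
    rw [map_add, map_mul, map_mul, map_mul, ← e1, ← e2]; ring
  refine ⟨⟨(p1 * q2 + p2 * q1, q1 * q2), hq, hrep⟩, ?_⟩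
  have n1 := iota_ne hq1
  have n2 := iota_ne hq2
  rw [ev_spec hq hrep, v1, v2]
  simp only [map_add, map_mul]
  rw [div_add_div _ _ n1 n2]
  ring

lemma ev_neg {a : Fin t → ℚ} {h₁ : FracXYZ r s t} (H1 : Oev a h₁) :
    Oev a (-h₁) ∧ ev a (-h₁) = -ev a h₁ := by
  obtain ⟨p1, q1, hq1, e1, v1⟩ := H1.rep
  have hrep : (-h₁) * toFracXYZ r s t q1 = toFracXYZ r s t (-p1) := by
    rw [map_neg, ← e1]; ring
  refine ⟨⟨(-p1, q1), hq1, hrep⟩, ?_⟩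
  rw [ev_spec hq1 hrep, v1, map_neg, map_neg, neg_div]

lemma ev_zero (a : Fin t → ℚ) : Oev (r := r) (s := s) a 0 ∧ ev a (0 : FracXYZ r s t) = 0 := by
  simpa using ev_iota a (0 : MvPolynomial (Fin r ⊕ (Fin s ⊕ Fin t)) ℚ)

lemma ev_one (a : Fin t → ℚ) : Oev (r := r) (s := s) a 1 ∧ ev a (1 : FracXYZ r s t) = 1 := by
  simpa using ev_iota a (1 : MvPolynomial (Fin r ⊕ (Fin s ⊕ Fin t)) ℚ)

lemma ev_pow {a : Fin t → ℚ} {h : FracXYZ r s t} (H : Oev a h) (n : ℕ) :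
    Oev a (h ^ n) ∧ ev a (h ^ n) = (ev a h) ^ n := by
  induction n with
  | zero => simpa using ev_one a
  | succ k ih =>
    have hm := ev_mul ih.1 H
    rw [← pow_succ] at hm
    exact ⟨hm.1, by rw [hm.2, ih.2, pow_succ]⟩

lemma ev_ne_zero {a : Fin t → ℚ} {h : FracXYZ r s t} {p q}
    (hp : phi (r := r) (s := s) a p ≠ 0) (hq : phi (r := r) (s := s) a q ≠ 0)
    (hrep : h * toFracXYZ r s t q = toFracXYZ r s t p) : ev a h ≠ 0 := by
  rw [ev_spec hq hrep]
  exact div_ne_zero (iota_ne hp) (iota_ne hq)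

lemma ev_subring {a : Fin t → ℚ} {G : Set (FracXYZ r s t)} {N : Subfield (FracXYZ r s t)}
    (hG : ∀ w ∈ G, Oev a w ∧ ev a w ∈ N) :
    ∀ w ∈ Subring.closure G, Oev a w ∧ ev a w ∈ N := by
  intro w hw
  induction hw using Subring.closure_induction with
  | mem x hx => exact hG x hx
  | zero => exact ⟨(ev_zero a).1, by rw [(ev_zero a).2]; exact zero_mem N⟩
  | one => exact ⟨(ev_one a).1, by rw [(ev_one a).2]; exact one_mem N⟩
  | add x y hx hy ihx ihy =>
    exact ⟨(ev_add ihx.1 ihy.1).1,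
      by rw [(ev_add ihx.1 ihy.1).2]; exact add_mem ihx.2 ihy.2⟩
  | neg x hx ihx =>
    exact ⟨(ev_neg ihx.1).1, by rw [(ev_neg ihx.1).2]; exact neg_mem ihx.2⟩
  | mul x y hx hy ihx ihy =>
    exact ⟨(ev_mul ihx.1 ihy.1).1,
      by rw [(ev_mul ihx.1 ihy.1).2]; exact mul_mem ihx.2 ihy.2⟩

lemma phi_rename (a : Fin t → ℚ) (p : MvPolynomial (Fin r ⊕ Fin s) ℚ) :
    phi a (rename (Sum.map (id : Fin r → Fin r) (Sum.inl : Fin s → Fin s ⊕ Fin t)) p) =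
      rename (Sum.map (id : Fin r → Fin r) (Sum.inl : Fin s → Fin s ⊕ Fin t)) p := by
  induction p using MvPolynomial.induction_on with
  | C c => rw [rename_C, phi_C]
  | add p q hp hq => rw [map_add, map_add, hp, hq]
  | mul_X p v hp =>
    rw [map_mul, map_mul, hp, rename_X, phi_X]
    rcases v with i | j <;> rfl

lemma ev_liftXY (a : Fin t → ℚ) (p : MvPolynomial (Fin r ⊕ Fin s) ℚ) :
    Oev a (liftXY r s t p) ∧ ev a (liftXY r s t p) = liftXY r s t p := by
  have h1 : liftXY r s t p =
      toFracXYZ r s t (rename (Sum.map (id : Fin r → Fin r) (Sum.inl : Fin s → Fin s ⊕ Fin t)) p) :=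
    rfl
  rw [h1]
  refine ⟨(ev_iota a _).1, ?_⟩
  rw [(ev_iota a _).2, phi_rename]

lemma ev_xVar (a : Fin t → ℚ) (i : Fin r) :
    Oev a (xVar r s t i) ∧ ev a (xVar r s t i) = xVar r s t i := by
  refine ⟨(ev_iota a _).1, ?_⟩
  rw [xVar, (ev_iota a _).2, phi_X]
  rfl

lemma ev_yVar (a : Fin t → ℚ) (j : Fin s) :
    Oev a (yVar r s t j) ∧ ev a (yVar r s t j) = yVar r s t j := by
  refine ⟨(ev_iota a _).1, ?_⟩
  rw [yVar, (ev_iota a _).2, phi_X]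
  rfl

lemma iota_C (c : ℚ) : toFracXYZ r s t (C c) = (c : FracXYZ r s t) :=
  eq_ratCast ((toFracXYZ r s t).comp (C : ℚ →+* MvPolynomial (Fin r ⊕ (Fin s ⊕ Fin t)) ℚ)) c

lemma ev_zVar (a : Fin t → ℚ) (k : Fin t) :
    Oev a (zVar r s t k) ∧ ev a (zVar r s t k) = ((a k : ℚ) : FracXYZ r s t) := by
  refine ⟨(ev_iota a _).1, ?_⟩
  rw [zVar, (ev_iota a _).2, phi_X]
  show toFracXYZ r s t (C (a k)) = _
  exact iota_C (a k)

lemma liftYZ_X_inl (j : Fin s) :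
    liftYZ r s t (X (Sum.inl j)) = yVar r s t j := by
  show toFracXYZ r s t (rename _ (X (Sum.inl j))) = _
  rw [rename_X]; rfl

lemma liftYZ_X_inr (k : Fin t) :
    liftYZ r s t (X (Sum.inr k)) = zVar r s t k := by
  show toFracXYZ r s t (rename _ (X (Sum.inr k))) = _
  rw [rename_X]; rfl

lemma liftXY_X_inl (i : Fin r) :
    liftXY r s t (X (Sum.inl i)) = xVar r s t i := by
  show toFracXYZ r s t (rename _ (X (Sum.inl i))) = _
  rw [rename_X]; rfl

lemma liftXY_X_inr (j : Fin s) :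
    liftXY r s t (X (Sum.inr j)) = yVar r s t j := by
  show toFracXYZ r s t (rename _ (X (Sum.inr j))) = _
  rw [rename_X]; rfl

lemma mem_closure_quot {F : Type*} [Field F] {A : Set F} {w : F}
    (hw : w ∈ Subfield.closure A) :
    ∃ α β, α ∈ Subring.closure A ∧ β ∈ Subring.closure A ∧ β ≠ 0 ∧ w * β = α := by
  obtain ⟨y, hy, z, hz, hzw⟩ := Subfield.mem_closure_iff.mp hw
  by_cases hz0 : z = 0
  · refine ⟨0, 1, zero_mem _, one_mem _, one_ne_zero, ?_⟩
    rw [← hzw, hz0]; simp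
  · refine ⟨y, z, hy, hz, hz0, ?_⟩
    rw [← hzw]; field_simp


lemma set_step' {F : Type*} (C : Set F) {u' : ℕ} (u : Fin u' → F) (i : Fin u') :
    (C ∪ {w | ∃ j : Fin u', (j : ℕ) < ((i.castSucc : Fin (u' + 1)) : ℕ) ∧ w = u j}) ∪ {u i} =
      C ∪ {w | ∃ j : Fin u', (j : ℕ) < ((i.succ : Fin (u' + 1)) : ℕ) ∧ w = u j} := by
  ext w
  simp only [Set.mem_union, Set.mem_setOf_eq, Set.mem_singleton_iff, Fin.coe_castSucc,
    Fin.val_succ]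
  constructor
  · rintro ((h | ⟨j, hj, rfl⟩) | rfl)
    · exact Or.inl h
    · exact Or.inr ⟨j, by omega, rfl⟩
    · exact Or.inr ⟨i, by omega, rfl⟩
  · rintro (h | ⟨j, hj, rfl⟩)
    · exact Or.inl (Or.inl h)
    · by_cases hji : (j : ℕ) < (i : ℕ)
      · exact Or.inl (Or.inr ⟨j, hji, rfl⟩)
      · have hj2 : j = i := Fin.ext (by omega)
        subst hj2
        exact Or.inr rfl

lemma cl_absorb {F : Type*} [Field F] (A s : Set F) :
    Subfield.closure (↑(Subfield.closure A) ∪ s) = Subfield.closure (A ∪ s) := by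
  rw [Subfield.closure_union, Subfield.closure_eq, Subfield.closure_union]

set_option maxHeartbeats 2000000 in
/-- The specialization argument. -/
lemma hard_lemma {r s t : ℕ} {S : Set ℕ} {m : ℕ} {f : Fin m → MvPolynomial (Fin r ⊕ Fin s) ℚ}
    {M : Subfield (FracXYZ r s t)}
    (hch : Chain S (QfYZ r s t m f) M) (hM : ∀ k, xVar r s t k ∈ M) :
    ∃ N : Subfield (FracXYZ r s t), QXY r s t ≤ N ∧ Chain S (QfY r s t m f) N := by
  obtain ⟨t', c, h0, hl, hs⟩ := (tower_iff_chain S _ M).mpr hch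
  choose xx nn hnS hxpow hcs using hs
  set G0 : Set (FracXYZ r s t) :=
    (Set.range fun i => liftXY r s t (f i)) ∪ Set.range (yVar r s t) ∪ Set.range (zVar r s t)
    with hG0
  have cEq : ∀ i : Fin (t' + 1),
      c i = Subfield.closure (G0 ∪ {w | ∃ j : Fin t', (j : ℕ) < (i : ℕ) ∧ w = xx j}) := by
    intro i
    induction i using Fin.induction with
    | zero =>
      have he : {w | ∃ j : Fin t', (j : ℕ) < ((0 : Fin (t' + 1)) : ℕ) ∧ w = xx j} = ∅ := by
        ext w; simp
      rw [h0, he, Set.union_empty]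
      rfl
    | succ i ih =>
      have h1 := hcs i
      rw [ih] at h1
      rw [h1]
      show Subfield.closure _ = _
      rw [cl_absorb, set_step']
  have hx_rep : ∀ j : Fin t', ∃ pq : MvPolynomial (Fin r ⊕ (Fin s ⊕ Fin t)) ℚ ×
      MvPolynomial (Fin r ⊕ (Fin s ⊕ Fin t)) ℚ,
      pq.2 ≠ 0 ∧ xx j * toFracXYZ r s t pq.2 = toFracXYZ r s t pq.1 := by
    intro j
    obtain ⟨p, q, hq, hdiv⟩ :=
      IsFractionRing.div_surjective (A := MvPolynomial (Fin r ⊕ (Fin s ⊕ Fin t)) ℚ) (xx j)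
    have hq0 : q ≠ 0 := nonZeroDivisors.ne_zero hq
    refine ⟨(p, q), hq0, ?_⟩
    show xx j * algebraMap (MvPolynomial (Fin r ⊕ (Fin s ⊕ Fin t)) ℚ) (FracXYZ r s t) q =
      algebraMap (MvPolynomial (Fin r ⊕ (Fin s ⊕ Fin t)) ℚ) (FracXYZ r s t) p
    have hne : algebraMap (MvPolynomial (Fin r ⊕ (Fin s ⊕ Fin t)) ℚ) (FracXYZ r s t) q ≠ 0 :=
      iota_ne hq0
    rw [← hdiv, div_mul_cancel₀ _ hne]
  choose pq hq0 hxrep using hx_rep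
  have hpow_rep : ∀ j : Fin t', ∃ αβ : FracXYZ r s t × FracXYZ r s t,
      αβ.1 ∈ Subring.closure (G0 ∪ {w | ∃ j' : Fin t', (j' : ℕ) < (j : ℕ) ∧ w = xx j'}) ∧
      αβ.2 ∈ Subring.closure (G0 ∪ {w | ∃ j' : Fin t', (j' : ℕ) < (j : ℕ) ∧ w = xx j'}) ∧
      αβ.2 ≠ 0 ∧ xx j ^ nn j * αβ.2 = αβ.1 := by
    intro j
    have h1 := hxpow j
    rw [cEq j.castSucc] at h1
    obtain ⟨α, β, hα, hβ, hβ0, hcomb⟩ := mem_closure_quot h1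
    exact ⟨(α, β), by simpa using hα, by simpa using hβ, hβ0, hcomb⟩
  choose αβ hmemα hmemβ hβ0 hpowrep using hpow_rep
  have hβ_rep : ∀ j : Fin t', ∃ bb : MvPolynomial (Fin r ⊕ (Fin s ⊕ Fin t)) ℚ ×
      MvPolynomial (Fin r ⊕ (Fin s ⊕ Fin t)) ℚ,
      bb.1 ≠ 0 ∧ bb.2 ≠ 0 ∧ (αβ j).2 * toFracXYZ r s t bb.2 = toFracXYZ r s t bb.1 := by
    intro j
    obtain ⟨b, b', hb', hdiv⟩ :=
      IsFractionRing.div_surjective (A := MvPolynomial (Fin r ⊕ (Fin s ⊕ Fin t)) ℚ) ((αβ j).2)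
    have hb'0 : b' ≠ 0 := nonZeroDivisors.ne_zero hb'
    have hb0 : b ≠ 0 := by
      intro h0
      apply hβ0 j
      rw [← hdiv, h0, map_zero, zero_div]
    refine ⟨(b, b'), hb0, hb'0, ?_⟩
    show (αβ j).2 * algebraMap (MvPolynomial (Fin r ⊕ (Fin s ⊕ Fin t)) ℚ) (FracXYZ r s t) b' =
      algebraMap (MvPolynomial (Fin r ⊕ (Fin s ⊕ Fin t)) ℚ) (FracXYZ r s t) b
    have hne : algebraMap (MvPolynomial (Fin r ⊕ (Fin s ⊕ Fin t)) ℚ) (FracXYZ r s t) b' ≠ 0 :=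
      iota_ne hb'0
    rw [← hdiv, div_mul_cancel₀ _ hne]
  choose bb hb0 hb'0 hβrep using hβ_rep
  have hxv_rep : ∀ k : Fin r, ∃ ee : (FracXYZ r s t × FracXYZ r s t) ×
      (MvPolynomial (Fin r ⊕ (Fin s ⊕ Fin t)) ℚ × MvPolynomial (Fin r ⊕ (Fin s ⊕ Fin t)) ℚ),
      ee.1.1 ∈ Subring.closure (G0 ∪ {w | ∃ j : Fin t', (j : ℕ) < t' ∧ w = xx j}) ∧
      ee.1.2 ∈ Subring.closure (G0 ∪ {w | ∃ j : Fin t', (j : ℕ) < t' ∧ w = xx j}) ∧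
      xVar r s t k * ee.1.2 = ee.1.1 ∧ ee.2.1 ≠ 0 ∧ ee.2.2 ≠ 0 ∧
      ee.1.2 * toFracXYZ r s t ee.2.2 = toFracXYZ r s t ee.2.1 := by
    intro k
    have h1 : xVar r s t k ∈ c (Fin.last t') := by rw [hl]; exact hM k
    rw [cEq (Fin.last t')] at h1
    simp only [Fin.val_last] at h1
    obtain ⟨α, β, hα, hβ, hβ0x, hcomb⟩ := mem_closure_quot h1
    obtain ⟨b, b', hb', hdiv⟩ :=
      IsFractionRing.div_surjective (A := MvPolynomial (Fin r ⊕ (Fin s ⊕ Fin t)) ℚ) β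
    have hb'0 : b' ≠ 0 := nonZeroDivisors.ne_zero hb'
    have hb0 : b ≠ 0 := by
      intro h0
      apply hβ0x
      rw [← hdiv, h0, map_zero, zero_div]
    refine ⟨((α, β), (b, b')), hα, hβ, hcomb, hb0, hb'0, ?_⟩
    show β * algebraMap (MvPolynomial (Fin r ⊕ (Fin s ⊕ Fin t)) ℚ) (FracXYZ r s t) b' =
      algebraMap (MvPolynomial (Fin r ⊕ (Fin s ⊕ Fin t)) ℚ) (FracXYZ r s t) b
    have hne : algebraMap (MvPolynomial (Fin r ⊕ (Fin s ⊕ Fin t)) ℚ) (FracXYZ r s t) b' ≠ 0 :=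
      iota_ne hb'0
    rw [← hdiv, div_mul_cancel₀ _ hne]
  choose ee heα heβ hcombx hce1 hce2 heβrep using hxv_rep
  -- the list of "bad denominators"
  set L : List (MvPolynomial (Fin r ⊕ (Fin s ⊕ Fin t)) ℚ) :=
    (List.ofFn fun j => (pq j).2) ++ ((List.ofFn fun j => (bb j).1) ++
    ((List.ofFn fun j => (bb j).2) ++ ((List.ofFn fun k => (ee k).2.1) ++
    (List.ofFn fun k => (ee k).2.2)))) with hLdef
  have hmemL : ∀ u ∈ L, u ≠ 0 := by
    intro u hu
    simp only [hLdef, List.mem_append, List.mem_ofFn, Set.mem_range] at hu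
    rcases hu with ⟨j, rfl⟩ | ⟨j, rfl⟩ | ⟨j, rfl⟩ | ⟨k, rfl⟩ | ⟨k, rfl⟩
    · exact hq0 j
    · exact hb0 j
    · exact hb'0 j
    · exact hce1 k
    · exact hce2 k
  have hL0 : (0 : MvPolynomial (Fin r ⊕ (Fin s ⊕ Fin t)) ℚ) ∉ L := fun h => hmemL 0 h rfl
  have hprod : L.prod ≠ 0 := List.prod_ne_zero hL0
  obtain ⟨a, ha⟩ := exists_good L.prod hprod
  have hgood : ∀ u ∈ L, phi a u ≠ 0 := by
    intro u hu h0
    apply ha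
    rw [map_list_prod]
    apply List.prod_eq_zero
    rw [← h0]
    exact List.mem_map_of_mem hu
  have hinL : ∀ j : Fin t', (pq j).2 ∈ L ∧ (bb j).1 ∈ L ∧ (bb j).2 ∈ L := by
    intro j
    refine ⟨?_, ?_, ?_⟩ <;>
        simp only [hLdef, List.mem_append, List.mem_ofFn, Set.mem_range]
    · exact Or.inl ⟨j, rfl⟩
    · exact Or.inr (Or.inl ⟨j, rfl⟩)
    · exact Or.inr (Or.inr (Or.inl ⟨j, rfl⟩))
  have hinL2 : ∀ k : Fin r, (ee k).2.1 ∈ L ∧ (ee k).2.2 ∈ L := by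
    intro k
    refine ⟨?_, ?_⟩ <;>
        simp only [hLdef, List.mem_append, List.mem_ofFn, Set.mem_range]
    · exact Or.inr (Or.inr (Or.inr (Or.inl ⟨k, rfl⟩)))
    · exact Or.inr (Or.inr (Or.inr (Or.inr ⟨k, rfl⟩)))
  have haq : ∀ j, phi a (pq j).2 ≠ 0 := fun j => hgood _ (hinL j).1
  have hab1 : ∀ j, phi a (bb j).1 ≠ 0 := fun j => hgood _ (hinL j).2.1
  have hab2 : ∀ j, phi a (bb j).2 ≠ 0 := fun j => hgood _ (hinL j).2.2
  have hac1 : ∀ k, phi a (ee k).2.1 ≠ 0 := fun k => hgood _ (hinL2 k).1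
  have hac2 : ∀ k, phi a (ee k).2.2 ≠ 0 := fun k => hgood _ (hinL2 k).2
  have hOx : ∀ j, Oev a (xx j) := fun j => ⟨pq j, haq j, hxrep j⟩
  set y : Fin t' → FracXYZ r s t := fun j => ev a (xx j) with hy
  set GfY : Set (FracXYZ r s t) :=
    (Set.range fun i => liftXY r s t (f i)) ∪ Set.range (yVar r s t) with hGfY
  have Hev : ∀ i : ℕ, ∀ w ∈ Subring.closure (G0 ∪ {w | ∃ j : Fin t', (j : ℕ) < i ∧ w = xx j}),
      Oev a w ∧ ev a w ∈ Subfield.closure (GfY ∪ {w | ∃ j : Fin t', (j : ℕ) < i ∧ w = y j}) := by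
    intro i
    apply ev_subring
    rintro w (((⟨i0, rfl⟩ | ⟨j0, rfl⟩) | ⟨k0, rfl⟩) | ⟨j, hj, rfl⟩)
    · refine ⟨(ev_liftXY a (f i0)).1, ?_⟩
      rw [(ev_liftXY a (f i0)).2]
      exact Subfield.subset_closure (Or.inl (Or.inl ⟨i0, rfl⟩))
    · refine ⟨(ev_yVar a j0).1, ?_⟩
      rw [(ev_yVar a j0).2]
      exact Subfield.subset_closure (Or.inl (Or.inr ⟨j0, rfl⟩))
    · refine ⟨(ev_zVar a k0).1, ?_⟩
      rw [(ev_zVar a k0).2]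
      exact SubfieldClass.ratCast_mem _ _
    · exact ⟨hOx j, Subfield.subset_closure (Or.inr ⟨j, hj, rfl⟩)⟩
  set d : Fin (t' + 1) → Subfield (FracXYZ r s t) := fun i =>
    Subfield.closure (GfY ∪ {w | ∃ j : Fin t', (j : ℕ) < (i : ℕ) ∧ w = y j}) with hd
  have hstep : ∀ i : Fin t', ∃ x' n', n' ∈ S ∧ x' ^ n' ∈ d i.castSucc ∧
      d i.succ = Subfield.closure (↑(d i.castSucc) ∪ {x'}) := by
    intro i
    refine ⟨y i, nn i, hnS i, ?_, ?_⟩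
    · have hOxn := ev_pow (hOx i) (nn i)
      have Hα := Hev (i : ℕ) (αβ i).1 (hmemα i)
      have Hβ := Hev (i : ℕ) (αβ i).2 (hmemβ i)
      have hevmul := ev_mul hOxn.1 Hβ.1
      rw [hpowrep i] at hevmul
      have hevβ : ev a (αβ i).2 ≠ 0 := ev_ne_zero (hab1 i) (hab2 i) (hβrep i)
      have hyi : y i ^ nn i = ev a (αβ i).1 / ev a (αβ i).2 := by
        rw [← hOxn.2, eq_div_iff hevβ]
        exact hevmul.2.symm
      have hdc : d i.castSucc =
          Subfield.closure (GfY ∪ {w | ∃ j : Fin t', (j : ℕ) < (i : ℕ) ∧ w = y j}) := by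
        simp only [hd, Fin.coe_castSucc]
      rw [hyi, hdc]
      exact div_mem Hα.2 Hβ.2
    · show d i.succ = Subfield.closure (↑(d i.castSucc) ∪ {y i})
      simp only [hd]
      rw [cl_absorb, set_step']
  have hchain : Chain S (d 0) (d (Fin.last t')) :=
    (tower_iff_chain S _ _).mp ⟨t', d, rfl, rfl, hstep⟩
  have hd0 : d 0 = QfY r s t m f := by
    have he : {w | ∃ j : Fin t', (j : ℕ) < ((0 : Fin (t' + 1)) : ℕ) ∧ w = y j} = ∅ := by
      ext w; simp
    show Subfield.closure _ = _
    rw [he, Set.union_empty]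
    rfl
  refine ⟨d (Fin.last t'), ?_, by rw [← hd0]; exact hchain⟩
  show QXY r s t ≤ d (Fin.last t')
  apply Subfield.closure_le.mpr
  rintro w (⟨k, rfl⟩ | ⟨j0, rfl⟩)
  · -- xVar k
    have Hα := Hev t' (ee k).1.1 (heα k)
    have Hβ := Hev t' (ee k).1.2 (heβ k)
    have hOxv := (ev_xVar (s := s) a k).1
    have hevmul := ev_mul hOxv Hβ.1
    rw [hcombx k] at hevmul
    have hevβ : ev a (ee k).1.2 ≠ 0 := ev_ne_zero (hac1 k) (hac2 k) (heβrep k)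
    have hxvk : xVar r s t k = ev a (ee k).1.1 / ev a (ee k).1.2 := by
      rw [← (ev_xVar (s := s) a k).2, eq_div_iff hevβ]
      exact hevmul.2.symm
    have hdl : d (Fin.last t') =
        Subfield.closure (GfY ∪ {w | ∃ j : Fin t', (j : ℕ) < t' ∧ w = y j}) := by
      simp only [hd, Fin.val_last]
    rw [hxvk, hdl]
    exact div_mem Hα.2 Hβ.2
  · exact Subfield.subset_closure (Or.inl (Or.inr ⟨j0, rfl⟩))

/- ====================  reformulation of the definitions  ==================== -/

def Solv (S : Set ℕ) {F : Type*} [Field F] (K L : Subfield F) : Prop :=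
  ∃ M, L ≤ M ∧ Chain S K M

lemma isRad_iff {F : Type*} [Field F] {K M : Subfield F} :
    IsRadicalExtension K M ↔ Chain {k : ℕ | 0 < k} K M := by
  rw [← tower_iff_chain]
  constructor <;> rintro ⟨u, c, h0, hl, hs⟩ <;> refine ⟨u, c, h0, hl, fun i => ?_⟩ <;>
    obtain ⟨x, k, h1, h2, h3⟩ := hs i <;> exact ⟨x, k, h1, h2, h3⟩

lemma isQuad_iff {F : Type*} [Field F] {K M : Subfield F} :
    IsQuadraticExtension K M ↔ Chain {2} K M := by
  rw [← tower_iff_chain]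
  constructor <;> rintro ⟨u, c, h0, hl, hs⟩ <;> refine ⟨u, c, h0, hl, fun i => ?_⟩
  · obtain ⟨x, h2, h3⟩ := hs i
    exact ⟨x, 2, rfl, h2, h3⟩
  · obtain ⟨x, k, hk, h2, h3⟩ := hs i
    have : k = 2 := hk
    subst this
    exact ⟨x, h2, h3⟩

lemma radSolv_iff {F : Type*} [Field F] {K L : Subfield F} :
    RadicallySolvable K L ↔ Solv {k : ℕ | 0 < k} K L :=
  exists_congr fun _ => and_congr_right fun _ => isRad_iff

lemma quadSolv_iff {F : Type*} [Field F] {K L : Subfield F} :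
    QuadraticallySolvable K L ↔ Solv {2} K L :=
  exists_congr fun _ => and_congr_right fun _ => isQuad_iff

lemma main_abstract {F : Type*} [Field F] (S : Set ℕ) (A B C D E : Subfield F)
    (hAB : A ≤ B) (hCB : C ≤ B) (hDE : D ≤ E) (hBE : B ≤ E) (hE : E ≤ B ⊔ D)
    (hhard : ∀ M, Chain S B M → E ≤ M → Solv S C D) :
    Solv S A E ↔ Solv S A B ∧ Solv S C D := by
  constructor
  · rintro ⟨M, hEM, hch⟩
    refine ⟨⟨M, hBE.trans hEM, hch⟩, ?_⟩
    have hlift := chain_lift hch hAB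
    exact hhard (B ⊔ M) hlift (hEM.trans le_sup_right)
  · rintro ⟨⟨M₁, hBM₁, hch₁⟩, ⟨M₂, hDM₂, hch₂⟩⟩
    have h2 := chain_lift hch₂ (hCB.trans hBM₁)
    exact ⟨M₁ ⊔ M₂, hE.trans (sup_le_sup hBM₁ hDM₂), hch₁.trans h2⟩

/- ====================  inclusions between the concrete fields  ==================== -/

variable {r s t m n : ℕ} {f : Fin m → MvPolynomial (Fin r ⊕ Fin s) ℚ}
  {g : Fin n → MvPolynomial (Fin s ⊕ Fin t) ℚ}

lemma hQfg_le : Qfg r s t m n f g ≤ QfYZ r s t m f := by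
  apply Subfield.closure_le.mpr
  rintro w (⟨i, rfl⟩ | ⟨j, rfl⟩)
  · exact Subfield.subset_closure (Or.inl (Or.inl ⟨i, rfl⟩))
  · apply polymem (liftYZ r s t) (QfYZ r s t m f) (fun v => ?_) (g j)
    rcases v with j0 | k0
    · rw [liftYZ_X_inl]
      exact Subfield.subset_closure (Or.inl (Or.inr ⟨j0, rfl⟩))
    · rw [liftYZ_X_inr]
      exact Subfield.subset_closure (Or.inr ⟨k0, rfl⟩)

lemma hQfY_le : QfY r s t m f ≤ QfYZ r s t m f := by
  apply Subfield.closure_le.mpr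
  rintro w (⟨i, rfl⟩ | ⟨j, rfl⟩)
  · exact Subfield.subset_closure (Or.inl (Or.inl ⟨i, rfl⟩))
  · exact Subfield.subset_closure (Or.inl (Or.inr ⟨j, rfl⟩))

lemma hQXY_le : QXY r s t ≤ QXYZ r s t := by
  apply Subfield.closure_le.mpr
  rintro w (⟨i, rfl⟩ | ⟨j, rfl⟩)
  · exact Subfield.subset_closure (Or.inl (Or.inl ⟨i, rfl⟩))
  · exact Subfield.subset_closure (Or.inl (Or.inr ⟨j, rfl⟩))

lemma hQfYZ_le : QfYZ r s t m f ≤ QXYZ r s t := by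
  apply Subfield.closure_le.mpr
  rintro w ((⟨i, rfl⟩ | ⟨j, rfl⟩) | ⟨k, rfl⟩)
  · apply polymem (liftXY r s t) (QXYZ r s t) (fun v => ?_) (f i)
    rcases v with i0 | j0
    · rw [liftXY_X_inl]
      exact Subfield.subset_closure (Or.inl (Or.inl ⟨i0, rfl⟩))
    · rw [liftXY_X_inr]
      exact Subfield.subset_closure (Or.inl (Or.inr ⟨j0, rfl⟩))
  · exact Subfield.subset_closure (Or.inl (Or.inr ⟨j, rfl⟩))
  · exact Subfield.subset_closure (Or.inr ⟨k, rfl⟩)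

lemma hQXYZ_le : QXYZ r s t ≤ QfYZ r s t m f ⊔ QXY r s t := by
  apply Subfield.closure_le.mpr
  rintro w ((⟨i, rfl⟩ | ⟨j, rfl⟩) | ⟨k, rfl⟩)
  · exact (le_sup_right : QXY r s t ≤ _)
      (Subfield.subset_closure (Or.inl ⟨i, rfl⟩))
  · exact (le_sup_right : QXY r s t ≤ _)
      (Subfield.subset_closure (Or.inr ⟨j, rfl⟩))
  · exact (le_sup_left : QfYZ r s t m f ≤ _)
      (Subfield.subset_closure (Or.inr ⟨k, rfl⟩))

lemma solv_iff (S : Set ℕ) :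
    Solv S (Qfg r s t m n f g) (QXYZ r s t) ↔
      Solv S (Qfg r s t m n f g) (QfYZ r s t m f) ∧ Solv S (QfY r s t m f) (QXY r s t) := by
  apply main_abstract S _ _ _ _ _ hQfg_le (hQfY_le.trans (le_refl _)) hQXY_le hQfYZ_le hQXYZ_le
  intro M hch hEM
  have hM : ∀ k, xVar r s t k ∈ M := fun k =>
    hEM (Subfield.subset_closure (Or.inl (Or.inl ⟨k, rfl⟩)))
  obtain ⟨N, hN, hcn⟩ := hard_lemma hch hM
  exact ⟨N, hN, hcn⟩

end RadProof

/-- Lemma: with `f ∈ ℚ[X,Y]^m`, `g ∈ ℚ[Y,Z]^n` and `ℚ(X,Y,Z)` finite over `ℚ(f,g)`,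
the extension `ℚ(X,Y,Z) : ℚ(f,g)` is radically (quadratically) solvable iff both
`ℚ(f,Y,Z) : ℚ(f,g)` and `ℚ(X,Y) : ℚ(f,Y)` are. -/
theorem statement4 (r s t m n : ℕ)
    (f : Fin m → MvPolynomial (Fin r ⊕ Fin s) ℚ)
    (g : Fin n → MvPolynomial (Fin s ⊕ Fin t) ℚ)
    (hfin : FiniteExtS (Qfg r s t m n f g) (QXYZ r s t)) :
    (RadicallySolvable (Qfg r s t m n f g) (QXYZ r s t) ↔
      (RadicallySolvable (Qfg r s t m n f g) (QfYZ r s t m f) ∧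
        RadicallySolvable (QfY r s t m f) (QXY r s t))) ∧
    (QuadraticallySolvable (Qfg r s t m n f g) (QXYZ r s t) ↔
      (QuadraticallySolvable (Qfg r s t m n f g) (QfYZ r s t m f) ∧
        QuadraticallySolvable (QfY r s t m f) (QXY r s t))) := by
  constructor
  · rw [RadProof.radSolv_iff, RadProof.radSolv_iff, RadProof.radSolv_iff]
    exact RadProof.solv_iff _
  · rw [RadProof.quadSolv_iff, RadProof.quadSolv_iff, RadProof.quadSolv_iff]
    exact RadProof.solv_iff _
end
end

section
/- Let K be a field with ℚ ⊆ K ⊂ ℂ, let S = {f₁,…,f_m} ⊂ K[X₁,…,X_n], let I ⊂ K[X₁,…,X_n] be the ideal generated by S, and let W = {x ∈ ℂⁿ : f_i(x) = 0 for all 1 ≤ i ≤ m}. Let I₁ = I ∩ K[X₁]. Then I₁ is an ideal of K[X₁] generated by a single polynomial h₁ ∈ K[X₁]. Furthermore, if W is non-empty and finite and h₁(a) = 0 for some a ∈ ℂ, then there exists x = (x₁,…,x_n) ∈ W with x₁ = a. -/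
namespace Statement5Aux

variable {K : Subfield ℂ} {n : ℕ}

/-- Coefficientwise application of a `K`-linear functional `ℂ →ₗ[K] K` to a
multivariate polynomial over `ℂ`. -/
noncomputable def phiM (φ : ℂ →ₗ[↥K] ↥K) (p : MvPolynomial (Fin n) ℂ) :
    MvPolynomial (Fin n) ↥K :=
  ∑ μ ∈ p.support, MvPolynomial.monomial μ (φ (MvPolynomial.coeff μ p))

lemma coeff_phiM (φ : ℂ →ₗ[↥K] ↥K) (p : MvPolynomial (Fin n) ℂ) (ν : Fin n →₀ ℕ) :
    MvPolynomial.coeff ν (phiM φ p) = φ (MvPolynomial.coeff ν p) := by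
  classical
  rw [phiM, MvPolynomial.coeff_sum]
  simp only [MvPolynomial.coeff_monomial]
  rw [Finset.sum_ite_eq' p.support ν (fun μ => φ (MvPolynomial.coeff μ p))]
  split_ifs with h
  · rfl
  · rw [MvPolynomial.notMem_support_iff.mp h, map_zero]

lemma phiM_sum {α : Type*} (φ : ℂ →ₗ[↥K] ↥K) (s : Finset α)
    (g : α → MvPolynomial (Fin n) ℂ) :
    phiM φ (∑ i ∈ s, g i) = ∑ i ∈ s, phiM φ (g i) := by
  apply MvPolynomial.ext; intro ν
  simp [coeff_phiM, MvPolynomial.coeff_sum, map_sum]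

lemma phiM_add (φ : ℂ →ₗ[↥K] ↥K) (p q : MvPolynomial (Fin n) ℂ) :
    phiM φ (p + q) = phiM φ p + phiM φ q := by
  apply MvPolynomial.ext; intro ν
  simp [coeff_phiM, MvPolynomial.coeff_add, map_add]

lemma phiM_mul_map (φ : ℂ →ₗ[↥K] ↥K) (x : MvPolynomial (Fin n) ℂ)
    (q : MvPolynomial (Fin n) ↥K) :
    phiM φ (x * MvPolynomial.map (K.subtype : ↥K →+* ℂ) q) = phiM φ x * q := by
  classical
  apply MvPolynomial.ext; intro ν
  rw [coeff_phiM, MvPolynomial.coeff_mul, MvPolynomial.coeff_mul, map_sum]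
  refine Finset.sum_congr rfl fun μ _ => ?_
  rw [MvPolynomial.coeff_map, coeff_phiM]
  have h1 : MvPolynomial.coeff μ.1 x * (K.subtype : ↥K →+* ℂ) (MvPolynomial.coeff μ.2 q)
      = (MvPolynomial.coeff μ.2 q) • (MvPolynomial.coeff μ.1 x) := by
    rw [mul_comm]; rfl
  rw [h1, map_smul, smul_eq_mul, mul_comm]

lemma phiM_monomial (φ : ℂ →ₗ[↥K] ↥K) (μ : Fin n →₀ ℕ) (c : ℂ) :
    phiM φ (MvPolynomial.monomial μ c) = MvPolynomial.monomial μ (φ c) := by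
  classical
  apply MvPolynomial.ext; intro ν
  rw [coeff_phiM, MvPolynomial.coeff_monomial, MvPolynomial.coeff_monomial,
    apply_ite φ, map_zero]

/-- Coefficientwise application for univariate polynomials. -/
noncomputable def phiP (φ : ℂ →ₗ[↥K] ↥K) (p : Polynomial ℂ) : Polynomial ↥K :=
  ∑ k ∈ p.support, Polynomial.monomial k (φ (p.coeff k))

lemma coeff_phiP (φ : ℂ →ₗ[↥K] ↥K) (p : Polynomial ℂ) (m : ℕ) :
    (phiP φ p).coeff m = φ (p.coeff m) := by
  classical
  rw [phiP, Polynomial.finset_sum_coeff]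
  simp only [Polynomial.coeff_monomial]
  rw [Finset.sum_ite_eq' p.support m (fun k => φ (p.coeff k))]
  split_ifs with h
  · rfl
  · rw [Polynomial.notMem_support_iff.mp h, map_zero]

lemma phiP_add (φ : ℂ →ₗ[↥K] ↥K) (p q : Polynomial ℂ) :
    phiP φ (p + q) = phiP φ p + phiP φ q := by
  apply Polynomial.ext; intro m
  simp [coeff_phiP, map_add]

lemma phiP_monomial (φ : ℂ →ₗ[↥K] ↥K) (k : ℕ) (c : ℂ) :
    phiP φ (Polynomial.monomial k c) = Polynomial.monomial k (φ c) := by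
  apply Polynomial.ext; intro m
  rw [coeff_phiP, Polynomial.coeff_monomial, Polynomial.coeff_monomial,
    apply_ite φ, map_zero]

lemma phiM_eval₂ (φ : ℂ →ₗ[↥K] ↥K) (i : Fin n) (P : Polynomial ℂ) :
    phiM φ (Polynomial.eval₂ MvPolynomial.C (MvPolynomial.X i) P)
      = Polynomial.eval₂ MvPolynomial.C (MvPolynomial.X i) (phiP φ P) := by
  induction P using Polynomial.induction_on' with
  | add p q hp hq =>
      rw [Polynomial.eval₂_add, phiM_add, hp, hq, phiP_add, Polynomial.eval₂_add]
  | monomial k c =>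
      rw [Polynomial.eval₂_monomial, phiP_monomial, Polynomial.eval₂_monomial,
        MvPolynomial.X_pow_eq_monomial, MvPolynomial.C_mul_monomial, mul_one,
        phiM_monomial, MvPolynomial.X_pow_eq_monomial, MvPolynomial.C_mul_monomial, mul_one]

lemma eval₂_phiP (φ : ℂ →ₗ[↥K] ↥K) (a : ℂ) (P : Polynomial ℂ) :
    Polynomial.eval₂ (K.subtype : ↥K →+* ℂ) a (phiP φ P)
      = ∑ k ∈ P.support, (φ (P.coeff k) : ℂ) * a ^ k := by
  rw [phiP, Polynomial.eval₂_finset_sum]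
  refine Finset.sum_congr rfl fun k _ => ?_
  rw [Polynomial.eval₂_monomial]
  rfl

end Statement5Aux
set_option synthInstance.maxHeartbeats 1000000 in
open Statement5Aux in
/-- Lemma: let `K ⊆ ℂ` be a subfield, `I ⊆ K[X₁,…,X_n]` the ideal generated by
`S = {f₁,…,f_m}`, and `W ⊆ ℂⁿ` the common zero set of `S`. Then the elimination
ideal `I₁ = I ∩ K[X₁]` is generated by a single polynomial `h₁`, and if `W` is
non-empty and finite then every complex root `a` of `h₁` extends to a point of `W`
with first coordinate `a`. -/
theorem statement5 (n m : ℕ) (hn : 0 < n) (K : Subfield ℂ)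
    (f : Fin m → MvPolynomial (Fin n) ↥K) :
    (∃ h₁ : Polynomial ↥K,
      Ideal.comap
          (Polynomial.eval₂RingHom (MvPolynomial.C : ↥K →+* MvPolynomial (Fin n) ↥K)
            (MvPolynomial.X ⟨0, hn⟩))
          (Ideal.span (Set.range f)) =
        Ideal.span {h₁}) ∧
    (∀ h₁ : Polynomial ↥K,
      Ideal.comap
          (Polynomial.eval₂RingHom (MvPolynomial.C : ↥K →+* MvPolynomial (Fin n) ↥K)
            (MvPolynomial.X ⟨0, hn⟩))
          (Ideal.span (Set.range f)) =
        Ideal.span {h₁} →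
      {x : Fin n → ℂ | ∀ i, MvPolynomial.eval₂ K.subtype x (f i) = 0}.Nonempty →
      {x : Fin n → ℂ | ∀ i, MvPolynomial.eval₂ K.subtype x (f i) = 0}.Finite →
      ∀ a : ℂ, Polynomial.eval₂ K.subtype a h₁ = 0 →
        ∃ x : Fin n → ℂ,
          (∀ i, MvPolynomial.eval₂ K.subtype x (f i) = 0) ∧ x ⟨0, hn⟩ = a) := by
  classical
  constructor
  · haveI := IsPrincipalIdealRing.principal
      (R := Polynomial ↥K)
      (Ideal.comap
        (Polynomial.eval₂RingHom (MvPolynomial.C : ↥K →+* MvPolynomial (Fin n) ↥K)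
          (MvPolynomial.X ⟨0, hn⟩))
        (Ideal.span (Set.range f)))
    exact ⟨_, (Submodule.IsPrincipal.span_singleton_generator _).symm⟩
  · intro h₁ hcomap _hne hfin a ha
    set Jc : Ideal (MvPolynomial (Fin n) ℂ) :=
      Ideal.span (Set.range fun i => MvPolynomial.map (K.subtype : ↥K →+* ℂ) (f i)) with hJc
    set E : Polynomial ℂ →+* MvPolynomial (Fin n) ℂ :=
      Polynomial.eval₂RingHom MvPolynomial.C (MvPolynomial.X ⟨0, hn⟩) with hE
    set W' : Finset (Fin n → ℂ) := hfin.toFinset with hW'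
    set Q : Polynomial ℂ := ∏ w ∈ W', (Polynomial.X - Polynomial.C (w ⟨0, hn⟩)) with hQ
    -- Step 1: E Q lies in the radical of Jc
    have hGrad : E Q ∈ Jc.radical := by
      rw [← MvPolynomial.vanishingIdeal_zeroLocus_eq_radical (K := ℂ)]
      rw [MvPolynomial.mem_vanishingIdeal_iff]
      intro x hx
      change MvPolynomial.eval x (E Q) = 0
      have hxW : ∀ i, MvPolynomial.eval₂ K.subtype x (f i) = 0 := by
        intro i
        rw [← MvPolynomial.eval_map (K.subtype : ↥K →+* ℂ) x (f i)]
        exact MvPolynomial.mem_zeroLocus_iff.mp hx _ (Ideal.subset_span ⟨i, rfl⟩)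
      have hxW' : x ∈ W' := hfin.mem_toFinset.mpr hxW
      have hEQ : MvPolynomial.eval x (E Q) = ∏ w ∈ W', (x ⟨0, hn⟩ - w ⟨0, hn⟩) := by
        rw [hQ, map_prod, map_prod]
        refine Finset.prod_congr rfl fun w _ => ?_
        rw [hE]
        simp
      rw [hEQ]
      exact Finset.prod_eq_zero hxW' (by rw [sub_self])
    obtain ⟨N, hN⟩ := Ideal.mem_radical_iff.mp hGrad
    set P : Polynomial ℂ := Q ^ N with hP
    have hEP : E P = (E Q) ^ N := by rw [hP, map_pow]
    obtain ⟨c, hc⟩ := (Submodule.mem_span_range_iff_exists_fun (MvPolynomial (Fin n) ℂ)).mp (hJc ▸ hN)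
    -- Step 2: key vanishing for every linear functional
    have key : ∀ φ : ℂ →ₗ[↥K] ↥K,
        Polynomial.eval₂ (K.subtype : ↥K →+* ℂ) a (phiP φ P) = 0 := by
      intro φ
      have hmem : (Polynomial.eval₂RingHom (MvPolynomial.C : ↥K →+* MvPolynomial (Fin n) ↥K)
          (MvPolynomial.X ⟨0, hn⟩)) (phiP φ P) ∈ Ideal.span (Set.range f) := by
        have h1 : (Polynomial.eval₂RingHom (MvPolynomial.C : ↥K →+* MvPolynomial (Fin n) ↥K)
            (MvPolynomial.X ⟨0, hn⟩)) (phiP φ P) = phiM φ (E P) := by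
          rw [hE, Polynomial.coe_eval₂RingHom, Polynomial.coe_eval₂RingHom]
          exact (phiM_eval₂ φ _ P).symm
        have h2 : E P = ∑ i, c i * MvPolynomial.map (K.subtype : ↥K →+* ℂ) (f i) := by
          rw [hEP, ← hc]
          refine Finset.sum_congr rfl fun i _ => ?_
          rw [smul_eq_mul]
        rw [h1, h2, phiM_sum]
        have h3 : ∀ i : Fin m,
            phiM φ (c i * MvPolynomial.map (K.subtype : ↥K →+* ℂ) (f i))
              = phiM φ (c i) * f i := fun i => phiM_mul_map φ (c i) (f i)
        rw [Finset.sum_congr rfl fun i _ => h3 i]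
        exact Ideal.sum_mem _ fun i _ =>
          Ideal.mul_mem_left _ _ (Ideal.subset_span ⟨i, rfl⟩)
      have hmem2 : phiP φ P ∈ Ideal.span {h₁} := hcomap ▸ (Ideal.mem_comap.mpr hmem)
      obtain ⟨r, hr⟩ := (Ideal.mem_span_singleton).mp hmem2
      rw [hr, Polynomial.eval₂_mul, ha, zero_mul]
    -- Step 3: reconstruct eval a P from the functionals of a basis
    set b := Module.Basis.ofVectorSpace ↥K ℂ with hb
    set J₀ : Finset _ := P.support.biUnion (fun k => (b.repr (P.coeff k)).support) with hJ₀
    have recon : Polynomial.eval a P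
        = ∑ j ∈ J₀, (b j) * Polynomial.eval₂ (K.subtype : ↥K →+* ℂ) a (phiP (b.coord j) P) := by
      have inner : ∀ k ∈ P.support,
          ∑ j ∈ J₀, ((b.repr (P.coeff k)) j : ℂ) * b j = P.coeff k := by
        intro k hk
        have hsub : (b.repr (P.coeff k)).support ⊆ J₀ := by
          rw [hJ₀]
          exact Finset.subset_biUnion_of_mem (fun k => (b.repr (P.coeff k)).support) hk
        have : ∑ j ∈ J₀, ((b.repr (P.coeff k)) j : ℂ) * b j
            = ∑ j ∈ (b.repr (P.coeff k)).support, ((b.repr (P.coeff k)) j : ℂ) * b j := by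
          refine (Finset.sum_subset hsub fun j _ hj => ?_).symm
          rw [Finsupp.notMem_support_iff.mp hj]
          simp
        rw [this]
        have h6 := Module.Basis.linearCombination_repr b (P.coeff k)
        rw [Finsupp.linearCombination_apply, Finsupp.sum] at h6
        calc ∑ j ∈ (b.repr (P.coeff k)).support, ((b.repr (P.coeff k)) j : ℂ) * b j
            = ∑ j ∈ (b.repr (P.coeff k)).support, (b.repr (P.coeff k)) j • b j := rfl
          _ = P.coeff k := h6
      rw [Polynomial.eval_eq_sum, Polynomial.sum]
      have expand : ∀ j : ↥(Module.Basis.ofVectorSpaceIndex ↥K ℂ),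
          Polynomial.eval₂ (K.subtype : ↥K →+* ℂ) a (phiP (b.coord j) P)
            = ∑ k ∈ P.support, ((b.repr (P.coeff k)) j : ℂ) * a ^ k := by
        intro j
        rw [eval₂_phiP]
        rfl
      calc ∑ k ∈ P.support, P.coeff k * a ^ k
          = ∑ k ∈ P.support, (∑ j ∈ J₀, ((b.repr (P.coeff k)) j : ℂ) * b j) * a ^ k := by
            refine Finset.sum_congr rfl fun k hk => ?_
            rw [inner k hk]
        _ = ∑ j ∈ J₀, b j * ∑ k ∈ P.support, ((b.repr (P.coeff k)) j : ℂ) * a ^ k := by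
            simp_rw [Finset.sum_mul, Finset.mul_sum]
            rw [Finset.sum_comm]
            exact Finset.sum_congr rfl fun j _ => Finset.sum_congr rfl fun k _ => by ring
        _ = ∑ j ∈ J₀, (b j) * Polynomial.eval₂ (K.subtype : ↥K →+* ℂ) a (phiP (b.coord j) P) := by
            refine Finset.sum_congr rfl fun j _ => ?_
            rw [expand j]
    have hPa : Polynomial.eval a P = 0 := by
      rw [recon]
      exact Finset.sum_eq_zero fun j _ => by rw [key (b.coord j), mul_zero]
    -- Step 4: extract a point of W
    rw [hP, Polynomial.eval_pow] at hPa
    have hNne : N ≠ 0 := by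
      intro h0
      rw [h0, pow_zero] at hPa
      exact one_ne_zero hPa
    have hQa : Polynomial.eval a Q = 0 := pow_eq_zero_iff hNne |>.mp hPa
    rw [hQ, Polynomial.eval_prod] at hQa
    obtain ⟨w, hwW, hw⟩ := Finset.prod_eq_zero_iff.mp hQa
    refine ⟨w, hfin.mem_toFinset.mp hwW, ?_⟩
    have : a - w ⟨0, hn⟩ = 0 := by simpa using hw
    exact (sub_eq_zero.mp this).symm
end

section
/- Suppose (G,p) is a generic complex realisation of a graph G = (V,E) with V = {v₁,…,v_n} and n ≥ 3. Then there are exactly four realisations (G,q_j), 1 ≤ j ≤ 4, which are congruent to (G,p) and satisfy q_j(v₁) = (0,0) and q_j(v₂) = (0,z) for some z ∈ ℂ. Furthermore, ℚ(q_i) = ℚ(q_j) for all 1 ≤ i < j ≤ 4. -/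
open scoped Classical

noncomputable section

/-- A finite graph: a finite set of vertices (natural numbers) and of edges. -/
structure RGraph : Type where
  verts : Finset ℕ
  edges : Finset (Sym2 ℕ)

namespace RGraph

/-- A graph is well-formed if it has no loops and edges join vertices. -/
def WellFormed (G : RGraph) : Prop :=
  (∀ e ∈ G.edges, ¬ e.IsDiag) ∧ (∀ e ∈ G.edges, ∀ v ∈ e, v ∈ G.verts)

def union (G H : RGraph) : RGraph := ⟨G.verts ∪ H.verts, G.edges ∪ H.edges⟩

def addEdge (G : RGraph) (u v : ℕ) : RGraph := ⟨G.verts, insert s(u, v) G.edges⟩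

def deleteEdge (G : RGraph) (e : Sym2 ℕ) : RGraph := ⟨G.verts, G.edges.erase e⟩

end RGraph

/-- `d_p(u,v) = a² + b²` where `(a,b) = p u - p v`. -/
def sqDist {R : Type*} [CommRing R] (p : ℕ → R × R) (u v : ℕ) : R :=
  ((p u).1 - (p v).1) ^ 2 + ((p u).2 - (p v).2) ^ 2

/-- Two frameworks are equivalent if corresponding edges have equal squared lengths. -/
def FEquiv {R : Type*} [CommRing R] (G : RGraph) (p q : ℕ → R × R) : Prop :=
  ∀ u v : ℕ, s(u, v) ∈ G.edges → sqDist p u v = sqDist q u v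

/-- Two frameworks are congruent if all pairs of vertices have equal squared distances. -/
def FCong {R : Type*} [CommRing R] (G : RGraph) (p q : ℕ → R × R) : Prop :=
  ∀ u ∈ G.verts, ∀ v ∈ G.verts, sqDist p u v = sqDist q u v

/-- A framework is generic if the coordinates of its points are
algebraically independent over `ℚ`. -/
def FGeneric {R : Type*} [CommRing R] [Algebra ℚ R] (G : RGraph) (p : ℕ → R × R) : Prop :=
  AlgebraicIndependent ℚ
    (fun vb : {x // x ∈ G.verts} × Bool => if vb.2 then (p vb.1.1).2 else (p vb.1.1).1)

/-- A complex framework is quasi-generic if it is congruent to a generic one. -/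
def QuasiGeneric (G : RGraph) (p : ℕ → ℂ × ℂ) : Prop :=
  ∃ p' : ℕ → ℂ × ℂ, FGeneric G p' ∧ FCong G p p'

/-- A real framework is rigid if all equivalent frameworks near it are congruent to it. -/
def RigidFramework (G : RGraph) (p : ℕ → ℝ × ℝ) : Prop :=
  ∃ ε : ℝ, 0 < ε ∧ ∀ q : ℕ → ℝ × ℝ, FEquiv G p q →
    (∀ v ∈ G.verts, ((p v).1 - (q v).1) ^ 2 + ((p v).2 - (q v).2) ^ 2 < ε) →
    FCong G p q

/-- A graph is rigid if every generic real realisation is rigid. -/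
def RGraph.Rigid (G : RGraph) : Prop :=
  ∀ p : ℕ → ℝ × ℝ, FGeneric G p → RigidFramework G p

/-- A graph is minimally rigid if it is rigid but ceases to be so on deleting any edge. -/
def RGraph.MinimallyRigid (G : RGraph) : Prop :=
  G.Rigid ∧ ∀ e ∈ G.edges, ¬ (G.deleteEdge e).Rigid

/-- A graph is globally rigid if for every generic complex realisation every
equivalent realisation is congruent to it. -/
def RGraph.GloballyRigid (G : RGraph) : Prop :=
  ∀ p : ℕ → ℂ × ℂ, FGeneric G p → ∀ q : ℕ → ℂ × ℂ, FEquiv G p q → FCong G p q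

/-- `ℚ(p)`: the subfield of `ℂ` generated by the coordinates of the points of `p`. -/
def coordField (G : RGraph) (p : ℕ → ℂ × ℂ) : Subfield ℂ :=
  Subfield.closure {z : ℂ | ∃ v ∈ G.verts, z = (p v).1 ∨ z = (p v).2}

/-- `ℚ(d_G(p))`: the subfield of `ℂ` generated by the squared edge lengths of `(G,p)`. -/
def distField (G : RGraph) (p : ℕ → ℂ × ℂ) : Subfield ℂ :=
  Subfield.closure {z : ℂ | ∃ u v : ℕ, s(u, v) ∈ G.edges ∧ z = sqDist p u v}

/-- A complex framework is radically solvable if some congruent framework `(G,q)`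
has `ℚ(q) : ℚ(d_G(q))` radically solvable. -/
def RadSolvableFramework (G : RGraph) (p : ℕ → ℂ × ℂ) : Prop :=
  ∃ q : ℕ → ℂ × ℂ, FCong G p q ∧ RadicallySolvable (distField G q) (coordField G q)

def QuadSolvableFramework (G : RGraph) (p : ℕ → ℂ × ℂ) : Prop :=
  ∃ q : ℕ → ℂ × ℂ, FCong G p q ∧ QuadraticallySolvable (distField G q) (coordField G q)

/-- A graph is radically solvable if every generic realisation is radically solvable. -/
def RGraph.RadSolvable (G : RGraph) : Prop :=
  ∀ p : ℕ → ℂ × ℂ, FGeneric G p → RadSolvableFramework G p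

/-- A graph is quadratically solvable if every generic realisation is so. -/
def RGraph.QuadSolvable (G : RGraph) : Prop :=
  ∀ p : ℕ → ℂ × ℂ, FGeneric G p → QuadSolvableFramework G p

/-- Standard position with respect to `(v₁, v₂)`: `p v₁ = (0,0)` and `p v₂ = (0,z)`. -/
def StdPos (p : ℕ → ℂ × ℂ) (v₁ v₂ : ℕ) : Prop :=
  p v₁ = (0, 0) ∧ (p v₂).1 = 0

open MvPolynomial in
lemma aeval_ne_zero_of_generic' {ι : Type*} {f : ι → ℂ} (hf : AlgebraicIndependent ℚ f)
    (P : MvPolynomial ι ℚ) (g : ι → ℚ) (h : MvPolynomial.eval g P ≠ 0) :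
    MvPolynomial.aeval f P ≠ 0 := by
  intro h0
  exact h (by rw [hf.eq_zero_of_aeval_eq_zero P h0]; simp)

open MvPolynomial

/-- Lemma: a generic framework on a graph with at least 3 vertices has exactly four
congruent realisations in standard position, all generating the same field. -/
theorem statement6 (G : RGraph) (hwf : G.WellFormed)
    (v₁ v₂ : ℕ) (hv₁ : v₁ ∈ G.verts) (hv₂ : v₂ ∈ G.verts) (hne : v₁ ≠ v₂)
    (hcard : 3 ≤ G.verts.card)
    (p : ℕ → ℂ × ℂ) (hp : FGeneric G p) :
    ∃ q : Fin 4 → ℕ → ℂ × ℂ,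
      (∀ j, FCong G p (q j) ∧ StdPos (q j) v₁ v₂) ∧
      (∀ j k, j ≠ k → ∃ v ∈ G.verts, q j v ≠ q k v) ∧
      (∀ q' : ℕ → ℂ × ℂ, FCong G p q' → StdPos q' v₁ v₂ →
        ∃ j, ∀ v ∈ G.verts, q j v = q' v) ∧
      (∀ j k, coordField G (q j) = coordField G (q k)) := by
  classical
  -- a third vertex
  obtain ⟨v₃, hv₃, h31, h32⟩ : ∃ v₃ ∈ G.verts, v₃ ≠ v₁ ∧ v₃ ≠ v₂ := by
    by_contra hcon
    push_neg at hcon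
    have hsub : G.verts ⊆ {v₁, v₂} := by
      intro v hv
      simp only [Finset.mem_insert, Finset.mem_singleton]
      by_contra hv'
      push_neg at hv'
      exact hv'.2 (hcon v hv hv'.1)
    have h2 := Finset.card_le_card hsub
    have h3 : ({v₁, v₂} : Finset ℕ).card ≤ 2 :=
      (Finset.card_insert_le _ _).trans (by simp)
    omega
  have hgen : AlgebraicIndependent ℚ
      (fun vb : {x // x ∈ G.verts} × Bool => if vb.2 then (p vb.1.1).2 else (p vb.1.1).1) := hp
  set f : {x // x ∈ G.verts} × Bool → ℂ :=
    fun vb => if vb.2 then (p vb.1.1).2 else (p vb.1.1).1 with hfdef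
  -- genericity: the distance between v₁ and v₂ is nonzero
  have hd : ((p v₂).1 - (p v₁).1) ^ 2 + ((p v₂).2 - (p v₁).2) ^ 2 ≠ 0 := by
    have h := aeval_ne_zero_of_generic' hgen
      ((X ((⟨v₂, hv₂⟩, false)) - X ((⟨v₁, hv₁⟩, false))) ^ 2
        + (X ((⟨v₂, hv₂⟩, true)) - X ((⟨v₁, hv₁⟩, true))) ^ 2)
      (fun i => if i = ((⟨v₂, hv₂⟩, false)) then 1 else 0)
      (by simp [Prod.ext_iff, hne, Ne.symm hne])
    simpa [hfdef] using h
  -- genericity: v₃ is not on the line through v₁, v₂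
  have hnum : ((p v₂).2 - (p v₁).2) * ((p v₃).1 - (p v₁).1)
      - ((p v₂).1 - (p v₁).1) * ((p v₃).2 - (p v₁).2) ≠ 0 := by
    have h := aeval_ne_zero_of_generic' hgen
      ((X ((⟨v₂, hv₂⟩, true)) - X ((⟨v₁, hv₁⟩, true)))
          * (X ((⟨v₃, hv₃⟩, false)) - X ((⟨v₁, hv₁⟩, false)))
        - (X ((⟨v₂, hv₂⟩, false)) - X ((⟨v₁, hv₁⟩, false)))
          * (X ((⟨v₃, hv₃⟩, true)) - X ((⟨v₁, hv₁⟩, true))))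
      (fun i => if i = ((⟨v₂, hv₂⟩, true)) then 1
        else if i = ((⟨v₃, hv₃⟩, false)) then 1 else 0)
      (by simp [Prod.ext_iff, hne, Ne.symm hne, h31, Ne.symm h31, h32, Ne.symm h32])
    simpa [hfdef] using h
  -- a square root of the distance
  obtain ⟨w, hw⟩ := IsAlgClosed.exists_pow_nat_eq
    (((p v₂).1 - (p v₁).1) ^ 2 + ((p v₂).2 - (p v₁).2) ^ 2) (n := 2) (by norm_num)
  have hw0 : w ≠ 0 := by
    intro h0
    apply hd
    rw [← hw, h0]
    ring
  -- the rotated coordinates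
  set Xc : ℕ → ℂ := fun v =>
    (((p v₂).2 - (p v₁).2) * ((p v).1 - (p v₁).1)
      - ((p v₂).1 - (p v₁).1) * ((p v).2 - (p v₁).2)) / w with hXcd
  set Yc : ℕ → ℂ := fun v =>
    (((p v₂).1 - (p v₁).1) * ((p v).1 - (p v₁).1)
      + ((p v₂).2 - (p v₁).2) * ((p v).2 - (p v₁).2)) / w with hYcd
  have key : ∀ u v : ℕ, (Xc u - Xc v) ^ 2 + (Yc u - Yc v) ^ 2
      = ((p u).1 - (p v).1) ^ 2 + ((p u).2 - (p v).2) ^ 2 := by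
    intro u v
    have h1 : Xc u - Xc v = (((p v₂).2 - (p v₁).2) * ((p u).1 - (p v).1)
        - ((p v₂).1 - (p v₁).1) * ((p u).2 - (p v).2)) / w := by
      simp only [hXcd]; ring
    have h2 : Yc u - Yc v = (((p v₂).1 - (p v₁).1) * ((p u).1 - (p v).1)
        + ((p v₂).2 - (p v₁).2) * ((p u).2 - (p v).2)) / w := by
      simp only [hYcd]; ring
    rw [h1, h2, div_pow, div_pow, ← add_div, div_eq_iff (pow_ne_zero 2 hw0)]
    linear_combination (-(((p u).1 - (p v).1) ^ 2 + ((p u).2 - (p v).2) ^ 2)) * hw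
  have hXc1 : Xc v₁ = 0 := by simp [hXcd]
  have hYc1 : Yc v₁ = 0 := by simp [hYcd]
  have hXc2 : Xc v₂ = 0 := by
    simp only [hXcd]
    rw [div_eq_zero_iff]
    left; ring
  have hYc2 : Yc v₂ = w := by
    simp only [hYcd]
    rw [div_eq_iff hw0]
    linear_combination -hw
  have hX3 : Xc v₃ ≠ 0 := by
    simp only [hXcd]
    exact div_ne_zero hnum hw0
  -- the four sign choices
  set E : Fin 4 → ℂ := fun j => if (j : ℕ) ≤ 1 then 1 else -1 with hEdef
  set D : Fin 4 → ℂ := fun j => if (j : ℕ) % 2 = 0 then 1 else -1 with hDdef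
  have hEpm : ∀ j, E j = 1 ∨ E j = -1 := by
    intro j; simp only [hEdef]; split <;> simp
  have hDpm : ∀ j, D j = 1 ∨ D j = -1 := by
    intro j; simp only [hDdef]; split <;> simp
  have hE2 : ∀ j, E j ^ 2 = 1 := by
    intro j; rcases hEpm j with h | h <;> rw [h] <;> norm_num
  have hD2 : ∀ j, D j ^ 2 = 1 := by
    intro j; rcases hDpm j with h | h <;> rw [h] <;> norm_num
  have hinj : ∀ j k : Fin 4, E j = E k → D j = D k → j = k := by
    intro j k h1 h2
    have hE' : ((j : ℕ) ≤ 1 ↔ (k : ℕ) ≤ 1) := by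
      simp only [hEdef] at h1
      by_cases c1 : (j : ℕ) ≤ 1 <;> by_cases c2 : (k : ℕ) ≤ 1 <;>
        simp only [c1, c2, if_true, if_false, if_pos, if_neg] <;>
        simp [c1, c2] at h1 ⊢ <;> norm_num at h1
    have hD' : ((j : ℕ) % 2 = 0 ↔ (k : ℕ) % 2 = 0) := by
      simp only [hDdef] at h2
      by_cases c1 : (j : ℕ) % 2 = 0 <;> by_cases c2 : (k : ℕ) % 2 = 0 <;>
        simp only [c1, c2] <;> simp [c1, c2] at h2 ⊢ <;> norm_num at h2
    have hj := j.isLt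
    have hk := k.isLt
    apply Fin.ext
    omega
  set q : Fin 4 → ℕ → ℂ × ℂ := fun j v => (E j * Xc v, D j * Yc v) with hq
  refine ⟨q, ?_, ?_, ?_, ?_⟩
  · -- congruence and standard position
    intro j
    constructor
    · intro u hu v hv
      unfold sqDist
      simp only [hq]
      calc ((p u).1 - (p v).1) ^ 2 + ((p u).2 - (p v).2) ^ 2
          = (Xc u - Xc v) ^ 2 + (Yc u - Yc v) ^ 2 := (key u v).symm
        _ = (E j * Xc u - E j * Xc v) ^ 2 + (D j * Yc u - D j * Yc v) ^ 2 := by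
            linear_combination ((Xc u - Xc v) ^ 2) * (hE2 j).symm
              + ((Yc u - Yc v) ^ 2) * (hD2 j).symm
    · constructor
      · show (E j * Xc v₁, D j * Yc v₁) = (0, 0)
        rw [hXc1, hYc1, mul_zero, mul_zero]
      · show E j * Xc v₂ = 0
        rw [hXc2, mul_zero]
  · -- the four realisations are pairwise distinct
    intro j k hjk
    by_cases hD : D j = D k
    · have hE : E j ≠ E k := fun h => hjk (hinj j k h hD)
      refine ⟨v₃, hv₃, fun hc => hE ?_⟩
      have h1 : E j * Xc v₃ = E k * Xc v₃ := congrArg Prod.fst hc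
      exact mul_right_cancel₀ hX3 h1
    · refine ⟨v₂, hv₂, fun hc => hD ?_⟩
      have h1 : D j * Yc v₂ = D k * Yc v₂ := congrArg Prod.snd hc
      rw [hYc2] at h1
      exact mul_right_cancel₀ hw0 h1
  · -- completeness
    intro q' hq' hstd
    have h11 : (q' v₁).1 = 0 := by rw [hstd.1]
    have h12 : (q' v₁).2 = 0 := by rw [hstd.1]
    have h2sq : (q' v₂).2 ^ 2 = w ^ 2 := by
      have k := key v₁ v₂
      rw [hXc1, hXc2, hYc1, hYc2] at k
      have hc := hq' v₁ hv₁ v₂ hv₂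
      unfold sqDist at hc
      rw [h11, h12, hstd.2] at hc
      linear_combination (-1 : ℂ) * k + (-1 : ℂ) * hc
    obtain ⟨δ, hδpm, hq2⟩ : ∃ δ : ℂ, (δ = 1 ∨ δ = -1) ∧ (q' v₂).2 = δ * w := by
      have hfac : ((q' v₂).2 - w) * ((q' v₂).2 + w) = 0 := by linear_combination h2sq
      rcases mul_eq_zero.mp hfac with h | h
      · exact ⟨1, Or.inl rfl, by linear_combination h⟩
      · exact ⟨-1, Or.inr rfl, by linear_combination h⟩
    have hδ2 : δ ^ 2 = 1 := by rcases hδpm with rfl | rfl <;> norm_num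
    have hy : ∀ v ∈ G.verts, (q' v).2 = δ * Yc v := by
      intro v hv
      have eq1 : (q' v).1 ^ 2 + (q' v).2 ^ 2 = Xc v ^ 2 + Yc v ^ 2 := by
        have k := key v v₁
        rw [hXc1, hYc1] at k
        have hc := hq' v hv v₁ hv₁
        unfold sqDist at hc
        rw [h11, h12] at hc
        linear_combination (-1 : ℂ) * k + (-1 : ℂ) * hc
      have e2 : Xc v ^ 2 + (Yc v - w) ^ 2
          = ((q' v).1 - 0) ^ 2 + ((q' v).2 - δ * w) ^ 2 := by
        have k := key v v₂
        rw [hXc2, hYc2] at k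
        have hc := hq' v hv v₂ hv₂
        unfold sqDist at hc
        rw [hstd.2, hq2] at hc
        linear_combination k + hc
      have h3 : (2 * w) * ((q' v).2 * δ) = (2 * w) * Yc v := by
        linear_combination e2 + eq1 + w ^ 2 * hδ2
      have h4 : (q' v).2 * δ = Yc v :=
        mul_left_cancel₀ (mul_ne_zero two_ne_zero hw0) h3
      linear_combination δ * h4 - (q' v).2 * hδ2
    have hxsq : ∀ v ∈ G.verts, (q' v).1 ^ 2 = Xc v ^ 2 := by
      intro v hv
      have eq1 : (q' v).1 ^ 2 + (q' v).2 ^ 2 = Xc v ^ 2 + Yc v ^ 2 := by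
        have k := key v v₁
        rw [hXc1, hYc1] at k
        have hc := hq' v hv v₁ hv₁
        unfold sqDist at hc
        rw [h11, h12] at hc
        linear_combination (-1 : ℂ) * k + (-1 : ℂ) * hc
      linear_combination eq1 - ((q' v).2 + δ * Yc v) * (hy v hv) - (Yc v) ^ 2 * hδ2
    have hpair : ∀ u ∈ G.verts, ∀ v ∈ G.verts,
        (q' u).1 * (q' v).1 = Xc u * Xc v := by
      intro u hu v hv
      have k := key u v
      have hc := hq' u hu v hv
      unfold sqDist at hc
      rw [hy u hu, hy v hv] at hc
      linear_combination (1/2 : ℂ) * k + (1/2 : ℂ) * hc + (1/2 : ℂ) * (hxsq u hu)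
        + (1/2 : ℂ) * (hxsq v hv) + (1/2 : ℂ) * (Yc u - Yc v) ^ 2 * hδ2
    have hx30 : (q' v₃).1 ≠ 0 := by
      intro h0
      apply hX3
      have h := hxsq v₃ hv₃
      have h' : Xc v₃ ^ 2 = 0 := by rw [← h, h0]; ring
      exact pow_eq_zero_iff (n := 2) (by norm_num) |>.mp h'
    set ε : ℂ := (q' v₃).1 / Xc v₃ with hεdef
    have hεx : (q' v₃).1 = ε * Xc v₃ := by
      rw [hεdef]; field_simp
    have hε2 : ε ^ 2 = 1 := by
      apply mul_right_cancel₀ (pow_ne_zero 2 hX3)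
      have h := hxsq v₃ hv₃
      rw [hεx] at h
      linear_combination h
    have hεpm : ε = 1 ∨ ε = -1 := by
      have hfac : (ε - 1) * (ε + 1) = 0 := by linear_combination hε2
      rcases mul_eq_zero.mp hfac with h | h
      · exact Or.inl (by linear_combination h)
      · exact Or.inr (by linear_combination h)
    have hx : ∀ v ∈ G.verts, (q' v).1 = ε * Xc v := by
      intro v hv
      apply mul_right_cancel₀ hx30
      have hp3 := hpair v hv v₃ hv₃
      linear_combination hp3 - (ε * Xc v) * hεx - (Xc v * Xc v₃) * hε2
    have hEv : E 0 = 1 ∧ E 1 = 1 ∧ E 2 = -1 ∧ E 3 = -1 := by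
      refine ⟨?_, ?_, ?_, ?_⟩ <;> simp only [hEdef] <;>
        norm_num [show ((0 : Fin 4) : ℕ) = 0 from rfl, show ((1 : Fin 4) : ℕ) = 1 from rfl,
          show ((2 : Fin 4) : ℕ) = 2 from rfl, show ((3 : Fin 4) : ℕ) = 3 from rfl]
    have hDv : D 0 = 1 ∧ D 1 = -1 ∧ D 2 = 1 ∧ D 3 = -1 := by
      refine ⟨?_, ?_, ?_, ?_⟩ <;> simp only [hDdef] <;>
        norm_num [show ((0 : Fin 4) : ℕ) = 0 from rfl, show ((1 : Fin 4) : ℕ) = 1 from rfl,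
          show ((2 : Fin 4) : ℕ) = 2 from rfl, show ((3 : Fin 4) : ℕ) = 3 from rfl]
    obtain ⟨j, hjE, hjD⟩ : ∃ j : Fin 4, E j = ε ∧ D j = δ := by
      rcases hεpm with h1 | h1 <;> rcases hδpm with h2 | h2
      · exact ⟨0, by rw [h1]; exact hEv.1, by rw [h2]; exact hDv.1⟩
      · exact ⟨1, by rw [h1]; exact hEv.2.1, by rw [h2]; exact hDv.2.1⟩
      · exact ⟨2, by rw [h1]; exact hEv.2.2.1, by rw [h2]; exact hDv.2.2.1⟩
      · exact ⟨3, by rw [h1]; exact hEv.2.2.2, by rw [h2]; exact hDv.2.2.2⟩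
    refine ⟨j, fun v hv => ?_⟩
    show (E j * Xc v, D j * Yc v) = q' v
    rw [hjE, hjD, ← hx v hv, ← hy v hv]
  · -- all four generate the same field
    have hfld : ∀ j : Fin 4, coordField G (q j)
        = Subfield.closure {z : ℂ | ∃ v ∈ G.verts, z = Xc v ∨ z = Yc v} := by
      intro j
      unfold coordField
      apply le_antisymm
      · rw [Subfield.closure_le]
        rintro z ⟨v, hv, hz | hz⟩
        · have hz' : z = E j * Xc v := hz
          rcases hEpm j with h | h
          · rw [hz', h, one_mul]
            exact Subfield.subset_closure ⟨v, hv, Or.inl rfl⟩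
          · rw [hz', h, neg_one_mul]
            exact Subfield.neg_mem _ (Subfield.subset_closure ⟨v, hv, Or.inl rfl⟩)
        · have hz' : z = D j * Yc v := hz
          rcases hDpm j with h | h
          · rw [hz', h, one_mul]
            exact Subfield.subset_closure ⟨v, hv, Or.inr rfl⟩
          · rw [hz', h, neg_one_mul]
            exact Subfield.neg_mem _ (Subfield.subset_closure ⟨v, hv, Or.inr rfl⟩)
      · rw [Subfield.closure_le]
        rintro z ⟨v, hv, hz | hz⟩
        · have hmem : E j * Xc v ∈ Subfield.closure
              {z : ℂ | ∃ v ∈ G.verts, z = (q j v).1 ∨ z = (q j v).2} :=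
            Subfield.subset_closure ⟨v, hv, Or.inl rfl⟩
          rcases hEpm j with h | h
          · rw [h, one_mul] at hmem
            rw [hz]; exact hmem
          · rw [h, neg_one_mul] at hmem
            rw [hz]
            simpa using Subfield.neg_mem _ hmem
        · have hmem : D j * Yc v ∈ Subfield.closure
              {z : ℂ | ∃ v ∈ G.verts, z = (q j v).1 ∨ z = (q j v).2} :=
            Subfield.subset_closure ⟨v, hv, Or.inr rfl⟩
          rcases hDpm j with h | h
          · rw [h, one_mul] at hmem
            rw [hz]; exact hmem
          · rw [h, neg_one_mul] at hmem
            rw [hz]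
            simpa using Subfield.neg_mem _ hmem
    intro j k
    rw [hfld j, hfld k]
end
end

section
/- Suppose (G,p) is a generic complex realisation of a rigid graph G = (V,E) with V = {v₁,…,v_n} and n ≥ 3, and (G,q) is a realisation congruent to (G,p) which is in standard position with respect to (v₁,v₂). Then (G,p) is radically (respectively quadratically) solvable if and only if ℚ(q) : ℚ(d_G(q)) is radically (respectively quadratically) solvable. -/
open scoped Classical

noncomputable section

section Aux

open Subfield

lemma le_adjoinEl {F : Type*} [Field F] (K : Subfield F) (x : F) : K ≤ K.adjoinEl x :=
  fun y hy => Subfield.subset_closure (Or.inl hy)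

lemma mem_adjoinEl {F : Type*} [Field F] (K : Subfield F) (x : F) : x ∈ K.adjoinEl x :=
  Subfield.subset_closure (Or.inr rfl)

lemma IsRadicalExtension.step {F : Type*} [Field F] {K M : Subfield F}
    (h : IsRadicalExtension K M) {x : F} (hx : x ^ 2 ∈ M) :
    IsRadicalExtension K (M.adjoinEl x) := by
  obtain ⟨t, c, h0, hlast, hstep⟩ := h
  refine ⟨t + 1, Fin.snoc c (M.adjoinEl x), ?_, ?_, ?_⟩
  · rw [show (0 : Fin (t + 2)) = Fin.castSucc 0 by simp, Fin.snoc_castSucc, h0]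
  · simp
  · intro i
    induction i using Fin.lastCases with
    | last =>
      refine ⟨x, 2, two_pos, ?_, ?_⟩
      · rw [Fin.snoc_castSucc, hlast]; exact hx
      · rw [Fin.succ_last, Fin.snoc_last, Fin.snoc_castSucc, hlast]
    | cast j =>
      obtain ⟨y, n, hn, hy, heq⟩ := hstep j
      refine ⟨y, n, hn, ?_, ?_⟩
      · rw [Fin.snoc_castSucc]; exact hy
      · rw [Fin.succ_castSucc, Fin.snoc_castSucc, Fin.snoc_castSucc, heq]

lemma IsQuadraticExtension.step {F : Type*} [Field F] {K M : Subfield F}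
    (h : IsQuadraticExtension K M) {x : F} (hx : x ^ 2 ∈ M) :
    IsQuadraticExtension K (M.adjoinEl x) := by
  obtain ⟨t, c, h0, hlast, hstep⟩ := h
  refine ⟨t + 1, Fin.snoc c (M.adjoinEl x), ?_, ?_, ?_⟩
  · rw [show (0 : Fin (t + 2)) = Fin.castSucc 0 by simp, Fin.snoc_castSucc, h0]
  · simp
  · intro i
    induction i using Fin.lastCases with
    | last =>
      refine ⟨x, ?_, ?_⟩
      · rw [Fin.snoc_castSucc, hlast]; exact hx
      · rw [Fin.succ_last, Fin.snoc_last, Fin.snoc_castSucc, hlast]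
    | cast j =>
      obtain ⟨y, hy, heq⟩ := hstep j
      refine ⟨y, ?_, ?_⟩
      · rw [Fin.snoc_castSucc]; exact hy
      · rw [Fin.succ_castSucc, Fin.snoc_castSucc, Fin.snoc_castSucc, heq]

lemma fold_adjoin {F : Type*} [Field F] (P : Subfield F → Prop)
    (hstep : ∀ (A : Subfield F) (x : F), x ^ 2 ∈ A → P A → P (A.adjoinEl x)) :
    ∀ (xs : List F) (A : Subfield F), P A → (∀ x ∈ xs, x ^ 2 ∈ A) →
      ∃ B : Subfield F, P B ∧ A ≤ B ∧ ∀ x ∈ xs, x ∈ B := by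
  intro xs
  induction xs with
  | nil => exact fun A hA _ => ⟨A, hA, le_rfl, by simp⟩
  | cons y ys ih =>
    intro A hA hsq
    have h1 : A ≤ A.adjoinEl y := le_adjoinEl A y
    obtain ⟨B, hB, hAB, hmem⟩ := ih (A.adjoinEl y)
      (hstep A y (hsq y List.mem_cons_self) hA)
      (fun x hx => h1 (hsq x (List.mem_cons_of_mem y hx)))
    refine ⟨B, hB, le_trans h1 hAB, ?_⟩
    intro x hx
    rcases List.mem_cons.mp hx with rfl | hx
    · exact hAB (mem_adjoinEl A x)
    · exact hmem x hx

lemma sqDist_mem_coordField (G : RGraph) (r : ℕ → ℂ × ℂ) {u v : ℕ}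
    (hu : u ∈ G.verts) (hv : v ∈ G.verts) : sqDist r u v ∈ coordField G r := by
  have h1 : (r u).1 ∈ coordField G r := Subfield.subset_closure ⟨u, hu, Or.inl rfl⟩
  have h2 : (r u).2 ∈ coordField G r := Subfield.subset_closure ⟨u, hu, Or.inr rfl⟩
  have h3 : (r v).1 ∈ coordField G r := Subfield.subset_closure ⟨v, hv, Or.inl rfl⟩
  have h4 : (r v).2 ∈ coordField G r := Subfield.subset_closure ⟨v, hv, Or.inr rfl⟩
  exact add_mem (pow_mem (sub_mem h1 h3) 2) (pow_mem (sub_mem h2 h4) 2)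

lemma distField_congr (G : RGraph) (hwf : G.WellFormed) {r r' : ℕ → ℂ × ℂ}
    (hc : ∀ u ∈ G.verts, ∀ v ∈ G.verts, sqDist r u v = sqDist r' u v) :
    distField G r = distField G r' := by
  unfold distField
  congr 1
  ext z
  constructor
  · rintro ⟨u, v, he, rfl⟩
    exact ⟨u, v, he, hc u (hwf.2 _ he u (Sym2.mem_mk_left u v))
      v (hwf.2 _ he v (Sym2.mem_mk_right u v))⟩
  · rintro ⟨u, v, he, rfl⟩
    exact ⟨u, v, he, (hc u (hwf.2 _ he u (Sym2.mem_mk_left u v))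
      v (hwf.2 _ he v (Sym2.mem_mk_right u v))).symm⟩

lemma sqDist_ne_zero_of_generic (G : RGraph) (p : ℕ → ℂ × ℂ) (hp : FGeneric G p)
    {u v : ℕ} (hu : u ∈ G.verts) (hv : v ∈ G.verts) (huv : u ≠ v) :
    sqDist p u v ≠ 0 := by
  classical
  set ι := {x // x ∈ G.verts} × Bool
  set f : ι → ℂ := fun vb => if vb.2 then (p vb.1.1).2 else (p vb.1.1).1 with hf
  have hinj : Function.Injective (MvPolynomial.aeval f : MvPolynomial ι ℚ →ₐ[ℚ] ℂ) :=
    algebraicIndependent_iff_injective_aeval.mp hp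
  set i₁ : ι := (⟨u, hu⟩, false) with hi₁
  set i₂ : ι := (⟨v, hv⟩, false) with hi₂
  set j₁ : ι := (⟨u, hu⟩, true) with hj₁d
  set j₂ : ι := (⟨v, hv⟩, true) with hj₂d
  set P : MvPolynomial ι ℚ :=
    (MvPolynomial.X i₁ - MvPolynomial.X i₂) ^ 2 +
    (MvPolynomial.X j₁ - MvPolynomial.X j₂) ^ 2 with hP
  have heval : MvPolynomial.aeval f P = sqDist p u v := by
    simp [hP, sqDist, hf, hi₁, hi₂, hj₁d, hj₂d]
  intro hzero
  have hP0 : P = 0 := hinj (by rw [heval, hzero]; simp)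
  have hone : MvPolynomial.eval (fun k : ι => if k = i₁ then (1 : ℚ) else 0) P = 1 := by
    have h12 : i₂ ≠ i₁ := fun h => huv.symm (congrArg (fun k : ι => k.1.1) h)
    have hj1 : j₁ ≠ i₁ := fun h => by simpa using congrArg Prod.snd h
    have hj2 : j₂ ≠ i₁ := fun h => by simpa using congrArg Prod.snd h
    simp [hP, h12, hj1, hj2]
  rw [hP0] at hone
  simp at hone

lemma solv_transfer (E : Subfield ℂ → Subfield ℂ → Prop)
    (Estep : ∀ (K A : Subfield ℂ) (x : ℂ), x ^ 2 ∈ A → E K A → E K (A.adjoinEl x))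
    (G : RGraph) (q q' : ℕ → ℂ × ℂ)
    (hc : ∀ u ∈ G.verts, ∀ v ∈ G.verts, sqDist q u v = sqDist q' u v)
    (v₁ v₂ : ℕ) (hv₁ : v₁ ∈ G.verts) (hv₂ : v₂ ∈ G.verts)
    (hstd : StdPos q v₁ v₂) (hz : (q v₂).2 ≠ 0)
    (K : Subfield ℂ) (M : Subfield ℂ)
    (hM : coordField G q' ≤ M) (hE : E K M) :
    ∃ N : Subfield ℂ, coordField G q ≤ N ∧ E K N := by
  obtain ⟨hq1, hq2⟩ := hstd
  set z := (q v₂).2 with hzdef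
  have hz2 : z ^ 2 ∈ M := by
    have h1 : sqDist q v₂ v₁ = z ^ 2 := by
      simp [sqDist, hq1, hq2, hzdef]
    have h2 : sqDist q v₂ v₁ = sqDist q' v₂ v₁ := hc v₂ hv₂ v₁ hv₁
    rw [← h1, h2]
    exact hM (sqDist_mem_coordField G q' hv₂ hv₁)
  set N₀ := M.adjoinEl z with hN₀
  have hEN₀ : E K N₀ := Estep K M z hz2 hE
  have hMN₀ : M ≤ N₀ := le_adjoinEl M z
  have hzN₀ : z ∈ N₀ := mem_adjoinEl M z
  have hsnd : ∀ w ∈ G.verts, (q w).2 ∈ N₀ := by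
    intro w hw
    have key : (q w).2 = (sqDist q' w v₁ + sqDist q' v₂ v₁ - sqDist q' w v₂) / (2 * z) := by
      rw [← hc w hw v₁ hv₁, ← hc v₂ hv₂ v₁ hv₁, ← hc w hw v₂ hv₂]
      field_simp [sqDist, hq1, hq2]
      simp only [sqDist, hq1, hq2, ← hzdef]
      ring
    rw [key]
    have hm : ∀ a ∈ G.verts, ∀ b ∈ G.verts, sqDist q' a b ∈ N₀ := fun a ha b hb =>
      hMN₀ (hM (sqDist_mem_coordField G q' ha hb))
    exact div_mem (sub_mem (add_mem (hm w hw v₁ hv₁) (hm v₂ hv₂ v₁ hv₁)) (hm w hw v₂ hv₂))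
      (mul_mem (by exact_mod_cast natCast_mem N₀ 2) hzN₀)
  have hfst2 : ∀ w ∈ G.verts, ((q w).1) ^ 2 ∈ N₀ := by
    intro w hw
    have key : ((q w).1) ^ 2 = sqDist q' w v₁ - ((q w).2) ^ 2 := by
      rw [← hc w hw v₁ hv₁]
      simp [sqDist, hq1]
    rw [key]
    exact sub_mem (hMN₀ (hM (sqDist_mem_coordField G q' hw hv₁))) (pow_mem (hsnd w hw) 2)
  set xs : List ℂ := G.verts.toList.map (fun w => (q w).1) with hxs
  obtain ⟨N, hEN, hN₀N, hmem⟩ := fold_adjoin (E K) (Estep K) xs N₀ hEN₀ (by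
    intro x hx
    obtain ⟨w, hw, rfl⟩ := List.mem_map.mp hx
    exact hfst2 w (Finset.mem_toList.mp hw))
  refine ⟨N, ?_, hEN⟩
  apply Subfield.closure_le.mpr
  rintro x ⟨w, hw, hx | hx⟩
  · subst hx
    exact hmem _ (List.mem_map.mpr ⟨w, Finset.mem_toList.mpr hw, rfl⟩)
  · subst hx
    exact hN₀N (hsnd w hw)

end Aux

/-- Lemma: a generic realisation of a rigid graph is radically (quadratically) solvable
iff `ℚ(q) : ℚ(d_G(q))` is radically (quadratically) solvable for a congruent
realisation `q` in standard position. -/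
theorem statement8 (G : RGraph) (hwf : G.WellFormed) (hrigid : G.Rigid)
    (hcard : 3 ≤ G.verts.card)
    (v₁ v₂ : ℕ) (hv₁ : v₁ ∈ G.verts) (hv₂ : v₂ ∈ G.verts) (hne : v₁ ≠ v₂)
    (p q : ℕ → ℂ × ℂ) (hp : FGeneric G p)
    (hcong : FCong G p q) (hstd : StdPos q v₁ v₂) :
    (RadSolvableFramework G p ↔ RadicallySolvable (distField G q) (coordField G q)) ∧
    (QuadSolvableFramework G p ↔ QuadraticallySolvable (distField G q) (coordField G q)) := by
  have hcq' : ∀ q' : ℕ → ℂ × ℂ, FCong G p q' →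
      ∀ u ∈ G.verts, ∀ v ∈ G.verts, sqDist q u v = sqDist q' u v := by
    intro q' hcg u hu v hv
    rw [← hcong u hu v hv, hcg u hu v hv]
  have hz : (q v₂).2 ≠ 0 := by
    intro h0
    have h1 : sqDist q v₂ v₁ = 0 := by
      simp [sqDist, hstd.1, hstd.2, h0]
    have h2 : sqDist p v₂ v₁ = 0 := by rw [hcong v₂ hv₂ v₁ hv₁, h1]
    exact sqDist_ne_zero_of_generic G p hp hv₂ hv₁ (Ne.symm hne) h2
  constructor
  · constructor
    · rintro ⟨q', hcg, M, hle, hext⟩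
      have hK : distField G q' = distField G q :=
        (distField_congr G hwf (hcq' q' hcg)).symm
      obtain ⟨N, hN1, hN2⟩ := solv_transfer (fun K A => IsRadicalExtension K A)
        (fun K A x hx hE => hE.step hx) G q q' (hcq' q' hcg) v₁ v₂ hv₁ hv₂ hstd hz
        (distField G q) M hle (hK ▸ hext)
      exact ⟨N, hN1, hN2⟩
    · intro h
      exact ⟨q, hcong, h⟩
  · constructor
    · rintro ⟨q', hcg, M, hle, hext⟩
      have hK : distField G q' = distField G q :=
        (distField_congr G hwf (hcq' q' hcg)).symm
      obtain ⟨N, hN1, hN2⟩ := solv_transfer (fun K A => IsQuadraticExtension K A)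
        (fun K A x hx hE => hE.step hx) G q q' (hcq' q' hcg) v₁ v₂ hv₁ hv₂ hstd hz
        (distField G q) M hle (hK ▸ hext)
      exact ⟨N, hN1, hN2⟩
    · intro h
      exact ⟨q, hcong, h⟩
end
end
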